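/- arXiv:1706.04065 — 4 statements merged into one kernel-verified Lean document; each statement's English description precedes it below -/
import Mathlib

section
/- Let U be a finite set and let α and β be two fixed-point-free involutions of U. For every element e of U, if v is the orbit of e under the subgroup generated by α and β, then there exists a positive integer k with |v| = 2k and (β ∘ α)^k(e) = e, and the orbit v consists exactly of the elements e, α(e), (β∘α)(e), (α∘β∘α)(e), …, i.e., the elements (β∘α)^i(e) and (α∘(β∘α)^i)(e) for 0 ≤ i < k. -/
def FPF {F : Type*} (π : Equiv.Perm F) : Prop := π * π = 1 ∧ ∀ x, π x ≠ x

def orbSet {F : Type*} (S : Set (Equiv.Perm F)) (x : F) : Set F :=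
  MulAction.orbit (Subgroup.closure S) x

noncomputable def orbCount {F : Type*} (S : Set (Equiv.Perm F)) : ℕ :=
  Nat.card (MulAction.orbitRel.Quotient (Subgroup.closure S) F)

noncomputable def genus {F : Type*} (θ σ' φ' : Equiv.Perm F) : ℤ :=
  (orbCount {θ, σ'} : ℤ) - orbCount {σ', φ'} - orbCount {θ, φ'} + 2 * orbCount {θ, σ', φ'}

def IsGraphEmb {F : Type*} (θ σ' φ' : Equiv.Perm F) : Prop :=
  FPF θ ∧ FPF σ' ∧ FPF φ' ∧ ∀ x : F, Nat.card (orbSet {θ, σ'} x) = 4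

def IsEdgeDeletion {F : Type*} (σ' φ' : Equiv.Perm F) (e : Set F)
    (θ₀ σ₀ φ₀ : Equiv.Perm {f : F // f ∉ e}) (θ : Equiv.Perm F) : Prop :=
  (∀ a : {f : F // f ∉ e}, (θ₀ a : F) = θ a ∧ (σ₀ a : F) = σ' a) ∧
  (∀ a : {f : F // f ∉ e}, ∃ m : ℕ,
     ((φ' * σ') ^ m) (φ' a) ∉ e ∧ (∀ j < m, ((φ' * σ') ^ j) (φ' a) ∈ e) ∧
     (φ₀ a : F) = ((φ' * σ') ^ m) (φ' a))

theorem stmt1 {U : Type*} [Fintype U]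
    (α β : Equiv.Perm U) (hα : FPF α) (hβ : FPF β) (e : U) :
    ∃ k : ℕ, 0 < k ∧ Nat.card (orbSet {α, β} e) = 2 * k ∧
      ((β * α) ^ k) e = e ∧
      orbSet {α, β} e =
        {f : U | ∃ i < k, f = ((β * α) ^ i) e ∨ f = α (((β * α) ^ i) e)} := by
  obtain ⟨hα2, hαf⟩ := hα
  obtain ⟨hβ2, hβf⟩ := hβ
  set γ : Equiv.Perm U := β * α with hγ
  have hγαγ : γ * α * γ = α := by
    have h : γ * α * γ = β * (α * α) * (β * α) := by rw [hγ]; group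
    rw [h, hα2, mul_one, ← mul_assoc, hβ2, one_mul]
  have hpow : ∀ t : ℕ, γ ^ t * α * γ ^ t = α := by
    intro t; induction t with
    | zero => simp
    | succ t ih =>
      have h1 : γ ^ (t+1) * α * γ ^ (t+1) = γ * (γ ^ t * α * γ ^ t) * γ := by
        rw [pow_succ]; group
      rw [h1, ih, hγαγ]
  have hpow' : ∀ (t : ℕ) (x : U), (γ ^ t) (α ((γ ^ t) x)) = α x := by
    intro t x
    have h := congrArg (fun u : Equiv.Perm U => u x) (hpow t)
    simpa [Equiv.Perm.mul_apply] using h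
  have hαα : ∀ y, α (α y) = y := by
    intro y; rw [← Equiv.Perm.mul_apply, hα2]; rfl
  have hββ : ∀ y, β (β y) = y := by
    intro y; rw [← Equiv.Perm.mul_apply, hβ2]; rfl
  have hγα : γ * α = β := by rw [hγ, mul_assoc, hα2, mul_one]
  have hβγ : ∀ y, β y = γ (α y) := by
    intro y; rw [← hγα]; rfl
  -- key: α e is never γ^m e
  have hkey : ∀ m : ℕ, α e ≠ (γ ^ m) e := by
    intro m hm
    rcases Nat.even_or_odd m with ⟨t, ht⟩ | ⟨t, ht⟩
    · apply hαf ((γ ^ t) e)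
      apply (γ ^ t).injective
      rw [hpow' t e, hm, ht, pow_add]; rfl
    · apply hβf (α ((γ ^ t) e))
      have h3 : α ((γ ^ t) e) = (γ ^ (t+1)) e := by
        apply (γ ^ t).injective
        rw [hpow' t e, hm, ht, show 2*t+1 = t + (t+1) by ring, pow_add]; rfl
      rw [hβγ, hαα, h3, pow_succ']; rfl
  -- minimal period
  have hpp : e ∈ Function.periodicPts ⇑γ := by
    apply Function.mk_mem_periodicPts (orderOf_pos γ)
    show (⇑γ)^[orderOf γ] e = e
    rw [← Equiv.Perm.coe_pow, pow_orderOf_eq_one]; rfl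
  set k := Function.minimalPeriod ⇑γ e with hkdef
  have hk0 : 0 < k := Function.minimalPeriod_pos_of_mem_periodicPts hpp
  have hke : (γ ^ k) e = e := by
    exact Function.isPeriodicPt_minimalPeriod ⇑γ e
  have hmod : ∀ n : ℕ, (γ ^ (n % k)) e = (γ ^ n) e := by
    intro n
    exact Function.iterate_mod_minimalPeriod_eq (f := ⇑γ) (x := e) (n := n)
  set S : Set U := {x | ∃ n : ℕ, x = (γ ^ n) e ∨ x = α ((γ ^ n) e)} with hS
  have heS : e ∈ S := ⟨0, Or.inl (by simp)⟩
  have hαS : ∀ x, x ∈ S → α x ∈ S := by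
    rintro x ⟨n, h | h⟩
    · exact ⟨n, Or.inr (by rw [h])⟩
    · exact ⟨n, Or.inl (by rw [h, hαα])⟩
  have hβS : ∀ x, x ∈ S → β x ∈ S := by
    rintro x ⟨n, h | h⟩
    · cases n with
      | zero =>
        refine ⟨k - 1, Or.inr ?_⟩
        have e3 : (γ ^ k) (α e) = α e := by
          have h' := hpow' k e; rwa [hke] at h'
        have e2 : (γ ^ (k-1)) (β e) = α e := by
          rw [hβγ e, ← Equiv.Perm.mul_apply, ← pow_succ,
            show k - 1 + 1 = k by omega]
          exact e3
        apply (γ ^ (k-1)).injective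
        rw [h, pow_zero, Equiv.Perm.one_apply, e2, hpow' (k-1) e]
      | succ n =>
        refine ⟨n, Or.inr ?_⟩
        have e2 : (γ ^ n) (β ((γ ^ (n+1)) e)) = α e := by
          rw [hβγ ((γ ^ (n+1)) e), ← Equiv.Perm.mul_apply, ← pow_succ]
          exact hpow' (n+1) e
        apply (γ ^ n).injective
        rw [h, e2, hpow' n e]
    · refine ⟨n + 1, Or.inl ?_⟩
      rw [h, ← Equiv.Perm.mul_apply, ← hγ, pow_succ']; rfl
  have hSiff : ∀ g ∈ Subgroup.closure ({α, β} : Set (Equiv.Perm U)), ∀ x, x ∈ S ↔ g x ∈ S := by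
    intro g hg
    induction hg using Subgroup.closure_induction with
    | mem y hy =>
      rcases hy with rfl | rfl
      · intro x
        refine ⟨hαS x, fun h => ?_⟩
        have := hαS _ h; rwa [hαα] at this
      · intro x
        refine ⟨hβS x, fun h => ?_⟩
        have := hβS _ h; rwa [hββ] at this
    | one => simp
    | mul g h hg' hh' ihg ihh =>
      intro x
      rw [ihh x, ihg (h x)]; rfl
    | inv g hg' ihg =>
      intro x
      have := ihg (g⁻¹ x)
      rw [← Equiv.Perm.mul_apply, mul_inv_cancel, Equiv.Perm.one_apply] at this
      exact this.symm
  have hγmem : γ ∈ Subgroup.closure ({α, β} : Set (Equiv.Perm U)) := by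
    rw [hγ]
    exact mul_mem (Subgroup.subset_closure (by simp)) (Subgroup.subset_closure (by simp))
  have hαmem : α ∈ Subgroup.closure ({α, β} : Set (Equiv.Perm U)) :=
    Subgroup.subset_closure (by simp)
  have horb : orbSet {α, β} e = S := by
    ext x; constructor
    · rintro ⟨⟨g, hg⟩, rfl⟩
      exact (hSiff g hg e).mp heS
    · rintro ⟨n, h | h⟩
      · exact ⟨⟨γ ^ n, pow_mem hγmem n⟩, h.symm⟩
      · exact ⟨⟨α * γ ^ n, mul_mem hαmem (pow_mem hγmem n)⟩, h.symm⟩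
  have hST : S = {f : U | ∃ i < k, f = (γ ^ i) e ∨ f = α ((γ ^ i) e)} := by
    ext x; constructor
    · rintro ⟨n, h | h⟩
      · exact ⟨n % k, Nat.mod_lt _ hk0, Or.inl (by rw [h, hmod])⟩
      · exact ⟨n % k, Nat.mod_lt _ hk0, Or.inr (by rw [h, hmod])⟩
    · rintro ⟨i, _, h⟩; exact ⟨i, h⟩
  have hinj : Set.InjOn (fun i : ℕ => (γ ^ i) e) (Set.Iio k) := by
    exact Function.iterate_injOn_Iio_minimalPeriod (f := ⇑γ) (x := e)
  have hinj2 : Set.InjOn (fun i : ℕ => α ((γ ^ i) e)) (Set.Iio k) :=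
    fun a ha b hb h => hinj ha hb (α.injective h)
  have hdisj : Disjoint ((fun i : ℕ => (γ ^ i) e) '' Set.Iio k)
      ((fun i : ℕ => α ((γ ^ i) e)) '' Set.Iio k) := by
    rw [Set.disjoint_left]
    rintro x ⟨i, _, rfl⟩ ⟨j, _, hx⟩
    apply hkey (j + i)
    have h := congrArg (⇑(γ ^ j)) hx
    rw [hpow' j e] at h
    rw [h, pow_add]; rfl
  have hTdecomp : {f : U | ∃ i < k, f = (γ ^ i) e ∨ f = α ((γ ^ i) e)} =
      ((fun i : ℕ => (γ ^ i) e) '' Set.Iio k) ∪ ((fun i : ℕ => α ((γ ^ i) e)) '' Set.Iio k) := by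
    ext x; constructor
    · rintro ⟨i, hi, h | h⟩
      exacts [Or.inl ⟨i, hi, h.symm⟩, Or.inr ⟨i, hi, h.symm⟩]
    · rintro (⟨i, hi, h⟩ | ⟨i, hi, h⟩)
      exacts [⟨i, hi, Or.inl h.symm⟩, ⟨i, hi, Or.inr h.symm⟩]
  have hIio : (Set.Iio k).ncard = k := by
    simp [Set.ncard_eq_toFinset_card']
  have hcard : Nat.card (orbSet {α, β} e) = 2 * k := by
    rw [horb, hST, hTdecomp]
    rw [Nat.card_coe_set_eq, Set.ncard_union_eq hdisj,
      Set.ncard_image_of_injOn hinj, Set.ncard_image_of_injOn hinj2, hIio]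
    ring
  exact ⟨k, hk0, hcard, hke, horb.trans hST⟩
end

section
/- Let U be a finite set and α, β two fixed-point-free involutions of U, and let e ∈ U with orbit v under ⟨α,β⟩. Define the permutation o_e of U by: o_e(f) = α(f) if f = (β∘α)^i(e) for some i ≥ 0; o_e(f) = β(f) if f = α((β∘α)^i(e)) for some i ≥ 0; and o_e(f) = f if f ∉ v. Then o_e is a well-defined permutation of U whose unique nontrivial orbit is exactly v. -/
open scoped Classical in
/-- The cycle permutation glued from `α` on `A` and `β` on `B`. -/
noncomputable def cyc {U : Type*} (α β : Equiv.Perm U) (A B : Set U)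
    (hαA : ∀ x ∈ A, α x ∈ B) (hβB : ∀ x ∈ B, β x ∈ A)
    (hαB : ∀ x ∈ B, α x ∈ A) (hβA : ∀ x ∈ A, β x ∈ B)
    (hdisj : ∀ x, x ∈ A → x ∉ B)
    (hαα : ∀ x, α (α x) = x) (hββ : ∀ x, β (β x) = x) : Equiv.Perm U where
  toFun x := if x ∈ A then α x else if x ∈ B then β x else x
  invFun x := if x ∈ B then α x else if x ∈ A then β x else x
  left_inv x := by
    dsimp only
    by_cases h1 : x ∈ A
    · rw [if_pos h1, if_pos (hαA x h1), hαα]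
    · by_cases h2 : x ∈ B
      · rw [if_neg h1, if_pos h2, if_neg (fun hb => hdisj _ (hβB x h2) hb),
          if_pos (hβB x h2), hββ]
      · rw [if_neg h1, if_neg h2, if_neg h2, if_neg h1]
  right_inv x := by
    dsimp only
    by_cases h2 : x ∈ B
    · rw [if_pos h2, if_pos (hαB x h2), hαα]
    · by_cases h1 : x ∈ A
      · rw [if_neg h2, if_pos h1, if_neg (fun hb => hdisj _ hb (hβA x h1)),
          if_pos (hβA x h1), hββ]
      · rw [if_neg h2, if_neg h1, if_neg h1, if_neg h2]

theorem stmt2 {U : Type*} [Fintype U]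
    (α β : Equiv.Perm U) (hα : FPF α) (hβ : FPF β) (e : U) :
    ∃ o : Equiv.Perm U,
      (∀ f : U, (∃ i : ℕ, f = ((β * α) ^ i) e) → o f = α f) ∧
      (∀ f : U, (∃ i : ℕ, f = α (((β * α) ^ i) e)) → o f = β f) ∧
      (∀ f : U, f ∉ orbSet {α, β} e → o f = f) ∧
      (∀ f : U, 1 < Nat.card (orbSet ({o} : Set (Equiv.Perm U)) f) ↔ f ∈ orbSet {α, β} e) ∧
      (∀ f : U, f ∈ orbSet {α, β} e → orbSet ({o} : Set (Equiv.Perm U)) f = orbSet {α, β} e) := by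
  classical
  obtain ⟨hα1, hα2⟩ := hα
  obtain ⟨hβ1, hβ2⟩ := hβ
  have hαinv : α⁻¹ = α := by
    rw [← mul_one α⁻¹, ← hα1, ← mul_assoc, inv_mul_cancel, one_mul]
  have hβinv : β⁻¹ = β := by
    rw [← mul_one β⁻¹, ← hβ1, ← mul_assoc, inv_mul_cancel, one_mul]
  set c : Equiv.Perm U := β * α with hc
  have hαα : ∀ x, α (α x) = x := fun x => by
    rw [← Equiv.Perm.mul_apply, hα1, Equiv.Perm.one_apply]
  have hββ : ∀ x, β (β x) = x := fun x => by
    rw [← Equiv.Perm.mul_apply, hβ1, Equiv.Perm.one_apply]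
  have hconj : α * c * α⁻¹ = c⁻¹ := by
    rw [hαinv, hc, mul_inv_rev, hαinv, hβinv, mul_assoc, mul_assoc, hα1, mul_one]
  have hconjk : ∀ k : ℤ, α * c ^ k = c ^ (-k) * α := by
    intro k
    have h1 : α * c ^ k * α⁻¹ = c ^ (-k) := by
      rw [← conj_zpow, hconj, inv_zpow, zpow_neg]
    rw [← h1, inv_mul_cancel_right]
  have hαck : ∀ (k : ℤ) (x : U), α ((c ^ k) x) = (c ^ (-k)) (α x) := by
    intro k x
    rw [← Equiv.Perm.mul_apply, hconjk k, Equiv.Perm.mul_apply]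
  have hβc : β = c * α := by rw [hc, mul_assoc, hα1, mul_one]
  have hβck : ∀ (k : ℤ) (x : U), β ((c ^ k) x) = (c ^ (1 - k)) (α x) := by
    intro k x
    have h : c * c ^ (-k) = c ^ (1 - k) := by
      rw [← zpow_one_add, sub_eq_add_neg]
    rw [← Equiv.Perm.mul_apply, hβc, mul_assoc, hconjk k, ← mul_assoc, h,
      Equiv.Perm.mul_apply]
  have hcomp : ∀ (a b : ℤ) (x : U), (c ^ a) ((c ^ b) x) = (c ^ (a + b)) x := by
    intro a b x
    rw [← Equiv.Perm.mul_apply, ← zpow_add]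
  set A : Set U := {x | ∃ k : ℤ, x = (c ^ k) e} with hAdef
  set B : Set U := {x | ∃ k : ℤ, x = (c ^ k) (α e)} with hBdef
  have hA : ∀ k : ℤ, (c ^ k) e ∈ A := fun k => ⟨k, rfl⟩
  have hB : ∀ k : ℤ, (c ^ k) (α e) ∈ B := fun k => ⟨k, rfl⟩
  have heA : e ∈ A := ⟨0, by simp⟩
  have hαeB : α e ∈ B := ⟨0, by simp⟩
  have hαA : ∀ x ∈ A, α x ∈ B := by
    rintro x ⟨k, rfl⟩; rw [hαck]; exact hB _
  have hαB : ∀ x ∈ B, α x ∈ A := by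
    rintro x ⟨k, rfl⟩; rw [hαck, hαα]; exact hA _
  have hβA : ∀ x ∈ A, β x ∈ B := by
    rintro x ⟨k, rfl⟩; rw [hβck]; exact hB _
  have hβB : ∀ x ∈ B, β x ∈ A := by
    rintro x ⟨k, rfl⟩; rw [hβck, hαα]; exact hA _
  -- key disjointness
  have hne : α e ∉ A := by
    rintro ⟨k, hk⟩
    rcases Int.even_or_odd k with ⟨i, hi⟩ | ⟨i, hi⟩
    · apply hα2 ((c ^ i) e)
      rw [hαck, hk, hcomp]
      have h5 : -i + k = i := by omega
      rw [h5]
    · apply hβ2 ((c ^ (i + 1)) e)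
      rw [hβck, hk, hcomp]
      have h5 : 1 - (i + 1) + k = i + 1 := by omega
      rw [h5]
  have hdisj : ∀ x, x ∈ A → x ∉ B := by
    rintro x ⟨k, rfl⟩ ⟨m, hm⟩
    apply hne
    refine ⟨k - m, ?_⟩
    have h2 := congrArg (fun y => (c ^ (-m)) y) hm
    simp only [hcomp] at h2
    have h3 : -m + m = (0 : ℤ) := by ring
    rw [h3, zpow_zero] at h2
    simp only [Equiv.Perm.one_apply] at h2
    have h4 : k - m = -m + k := by ring
    rw [h4]
    exact h2.symm
  -- order of c
  have hN0 : 0 < orderOf c := orderOf_pos c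
  have hNc : c ^ ((orderOf c : ℤ)) = 1 := by
    rw [zpow_natCast, pow_orderOf_eq_one]
  have Lred : ∀ k : ℤ, ∃ i : ℕ, (c ^ k : Equiv.Perm U) = c ^ (i : ℤ) := by
    intro k
    refine ⟨(k % (orderOf c : ℤ)).toNat, ?_⟩
    have hne' : (orderOf c : ℤ) ≠ 0 := by exact_mod_cast hN0.ne'
    have h1 : 0 ≤ k % (orderOf c : ℤ) := Int.emod_nonneg k hne'
    rw [Int.toNat_of_nonneg h1]
    conv_lhs => rw [← Int.emod_add_mul_ediv k (orderOf c : ℤ)]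
    rw [zpow_add, zpow_mul, hNc, one_zpow, mul_one]
  -- the cycle permutation
  set o : Equiv.Perm U := cyc α β A B hαA hβB hαB hβA hdisj hαα hββ with hodef
  have ho : ∀ x, o x = if x ∈ A then α x else if x ∈ B then β x else x := by
    intro x
    rw [hodef]
    simp only [cyc, Equiv.coe_fn_mk]
  have hoA : ∀ x ∈ A, o x = α x := fun x hx => by rw [ho, if_pos hx]
  have hoB : ∀ x ∈ B, o x = β x := fun x hx => by
    rw [ho, if_neg (fun h => hdisj x h hx), if_pos hx]
  have hoid : ∀ x, x ∉ A → x ∉ B → o x = x := fun x h1 h2 => by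
    rw [ho, if_neg h1, if_neg h2]
  -- orbit of ⟨α,β⟩ equals A ∪ B
  have hmemα : α ∈ Subgroup.closure ({α, β} : Set (Equiv.Perm U)) :=
    Subgroup.subset_closure (Set.mem_insert _ _)
  have hmemβ : β ∈ Subgroup.closure ({α, β} : Set (Equiv.Perm U)) :=
    Subgroup.subset_closure (Set.mem_insert_iff.mpr (Or.inr rfl))
  have horbAB : orbSet {α, β} e = A ∪ B := by
    apply Set.Subset.antisymm
    · rintro x ⟨g, rfl⟩
      have key : ∀ h : Equiv.Perm U, h ∈ Subgroup.closure ({α, β} : Set (Equiv.Perm U)) →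
          ∀ y, h y ∈ A ∪ B ↔ y ∈ A ∪ B := by
        intro h hh
        induction hh using Subgroup.closure_induction with
        | mem x hx =>
          rcases hx with hx | hx
          · subst hx
            intro y
            constructor
            · rintro (h | h)
              · exact Or.inr (by rw [← hαα y]; exact hαA _ h)
              · exact Or.inl (by rw [← hαα y]; exact hαB _ h)
            · rintro (h | h)
              · exact Or.inr (hαA _ h)
              · exact Or.inl (hαB _ h)
          · rcases hx with rfl
            intro y
            constructor
            · rintro (h | h)
              · exact Or.inr (by rw [← hββ y]; exact hβA _ h)
              · exact Or.inl (by rw [← hββ y]; exact hβB _ h)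
            · rintro (h | h)
              · exact Or.inr (hβA _ h)
              · exact Or.inl (hβB _ h)
        | one => intro y; simp
        | mul g h hg hh pg ph =>
          intro y
          rw [Equiv.Perm.mul_apply]
          exact (pg (h y)).trans (ph y)
        | inv g hg pg =>
          intro y
          have h3 := pg (g⁻¹ y)
          rw [← Equiv.Perm.mul_apply, mul_inv_cancel, Equiv.Perm.one_apply] at h3
          exact h3.symm
      exact (key (g : Equiv.Perm U) g.2 e).mpr (Or.inl heA)
    · rintro x (⟨k, rfl⟩ | ⟨k, rfl⟩)
      · exact ⟨⟨c ^ k, Subgroup.zpow_mem _ (mul_mem hmemβ hmemα) k⟩, rfl⟩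
      · exact ⟨⟨c ^ k * α, mul_mem (Subgroup.zpow_mem _ (mul_mem hmemβ hmemα) k) hmemα⟩, rfl⟩
  -- orbit of ⟨o⟩ through e equals A ∪ B
  have hmemo : o ∈ Subgroup.closure ({o} : Set (Equiv.Perm U)) :=
    Subgroup.subset_closure rfl
  have hstep : ∀ x ∈ orbSet ({o} : Set (Equiv.Perm U)) e,
      o x ∈ orbSet ({o} : Set (Equiv.Perm U)) e := by
    rintro x ⟨g, rfl⟩
    exact ⟨⟨o, hmemo⟩ * g, rfl⟩
  have hnat : ∀ i : ℕ, (c ^ (i : ℤ)) e ∈ orbSet ({o} : Set (Equiv.Perm U)) e ∧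
      α ((c ^ (i : ℤ)) e) ∈ orbSet ({o} : Set (Equiv.Perm U)) e := by
    intro i
    induction i with
    | zero =>
      have h0 : (c ^ ((0 : ℕ) : ℤ)) e = e := by simp
      constructor
      · rw [h0]; exact MulAction.mem_orbit_self e
      · rw [h0]
        have h1 := hstep e (MulAction.mem_orbit_self e)
        rw [hoA e heA] at h1
        exact h1
    | succ i ih =>
      have hstep1 : o (α ((c ^ (i : ℤ)) e)) = (c ^ ((i : ℤ) + 1)) e := by
        rw [hoB _ (hαA _ (hA i)), hαck, hβck, hαα]
        have h5 : (1 : ℤ) - -(i : ℤ) = (i : ℤ) + 1 := by omega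
        rw [h5]
      have hcast : ((i + 1 : ℕ) : ℤ) = (i : ℤ) + 1 := by push_cast; ring
      have h2 := hstep _ ih.2
      rw [hstep1] at h2
      constructor
      · rw [hcast]; exact h2
      · have h3 := hstep _ h2
        rw [hoA _ (hA ((i : ℤ) + 1))] at h3
        rw [hcast]; exact h3
  have hSorb : A ∪ B ⊆ orbSet ({o} : Set (Equiv.Perm U)) e := by
    rintro x (⟨k, rfl⟩ | ⟨k, rfl⟩)
    · obtain ⟨i, hi⟩ := Lred k
      rw [hi]; exact (hnat i).1
    · obtain ⟨i, hi⟩ := Lred (-k)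
      have h := hαck (-k) e
      rw [neg_neg] at h
      rw [← h, hi]
      exact (hnat i).2
  have horbO : orbSet ({o} : Set (Equiv.Perm U)) e = A ∪ B := by
    apply Set.Subset.antisymm
    · rintro x ⟨g, rfl⟩
      have key : ∀ h : Equiv.Perm U, h ∈ Subgroup.closure ({o} : Set (Equiv.Perm U)) →
          ∀ y, h y ∈ A ∪ B ↔ y ∈ A ∪ B := by
        intro h hh
        induction hh using Subgroup.closure_induction with
        | mem x hx =>
          rcases hx with rfl
          intro y
          constructor
          · intro hy
            by_contra hy'
            rw [hoid y (fun h' => hy' (Or.inl h')) (fun h' => hy' (Or.inr h'))] at hy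
            exact hy' hy
          · rintro (hy | hy)
            · rw [hoA y hy]; exact Or.inr (hαA y hy)
            · rw [hoB y hy]; exact Or.inl (hβB y hy)
        | one => intro y; simp
        | mul g h hg hh pg ph =>
          intro y
          rw [Equiv.Perm.mul_apply]
          exact (pg (h y)).trans (ph y)
        | inv g hg pg =>
          intro y
          have h3 := pg (g⁻¹ y)
          rw [← Equiv.Perm.mul_apply, mul_inv_cancel, Equiv.Perm.one_apply] at h3
          exact h3.symm
      exact (key (g : Equiv.Perm U) g.2 e).mpr (Or.inl heA)
    · exact hSorb
  have c5 : ∀ f ∈ A ∪ B, orbSet ({o} : Set (Equiv.Perm U)) f = A ∪ B := by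
    intro f hf
    have h1 : f ∈ MulAction.orbit (Subgroup.closure ({o} : Set (Equiv.Perm U))) e := hSorb hf
    have h2 : MulAction.orbit (Subgroup.closure ({o} : Set (Equiv.Perm U))) f =
        MulAction.orbit (Subgroup.closure ({o} : Set (Equiv.Perm U))) e :=
      MulAction.orbit_eq_iff.mpr h1
    calc orbSet ({o} : Set (Equiv.Perm U)) f
        = MulAction.orbit (Subgroup.closure ({o} : Set (Equiv.Perm U))) f := rfl
      _ = MulAction.orbit (Subgroup.closure ({o} : Set (Equiv.Perm U))) e := h2
      _ = A ∪ B := horbO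
  refine ⟨o, ?_, ?_, ?_, ?_, ?_⟩
  · rintro f ⟨i, hf⟩
    exact hoA f ⟨(i : ℤ), by rw [zpow_natCast]; exact hf⟩
  · rintro f ⟨i, hf⟩
    exact hoB f ⟨-(i : ℤ), by rw [hf, ← hαck, zpow_natCast]⟩
  · intro f hf
    rw [horbAB] at hf
    exact hoid f (fun h => hf (Or.inl h)) (fun h => hf (Or.inr h))
  · intro f
    rw [horbAB]
    by_cases hf : f ∈ A ∪ B
    · simp only [hf, iff_true]
      rw [c5 f hf, Nat.card_coe_set_eq, Set.one_lt_ncard_iff (Set.toFinite _)]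
      exact ⟨e, α e, Or.inl heA, Or.inr hαeB, fun h => hα2 e h.symm⟩
    · simp only [hf, iff_false, not_lt]
      have hsing : orbSet ({o} : Set (Equiv.Perm U)) f = {f} := by
        apply Set.Subset.antisymm
        · rintro x ⟨g, rfl⟩
          obtain ⟨k, hk⟩ := Subgroup.mem_closure_singleton.mp g.2
          have hfix : o f = f := hoid f (fun h => hf (Or.inl h)) (fun h => hf (Or.inr h))
          have hgf : (↑g : Equiv.Perm U) f = f := by
            rw [← hk]; exact Function.IsFixedPt.perm_zpow hfix k
          show (g • f) ∈ ({f} : Set U)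
          simp [Subgroup.smul_def, Equiv.Perm.smul_def, hgf]
        · intro x hx
          rw [Set.mem_singleton_iff] at hx
          rw [hx]
          exact MulAction.mem_orbit_self f
      rw [hsing, Nat.card_coe_set_eq, Set.ncard_singleton]
  · intro f hf
    rw [horbAB] at hf
    rw [horbAB]
    exact c5 f hf
end

section
/- The genus of any graph embedding is nonnegative; that is, for any graph embedding E, #edges(E) − #vertices(E) − #faces(E) + 2·#components(E) ≥ 0. -/
set_option maxHeartbeats 1000000
set_option synthInstance.maxHeartbeats 200000

open Module MulAction

namespace Stmt8Aux

set_option linter.unusedSectionVars false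

variable {F : Type*} [Fintype F]

/-- The submodule of `ZMod 2`-valued functions invariant under every element of `S`. -/
def fixSub (S : Set (Equiv.Perm F)) : Submodule (ZMod 2) (F → ZMod 2) where
  carrier := {u | ∀ π ∈ S, ∀ x, u (π x) = u x}
  add_mem' := by
    intro a b ha hb π hπ x
    simp only [Pi.add_apply, ha π hπ x, hb π hπ x]
  zero_mem' := by intro π hπ x; rfl
  smul_mem' := by
    intro c a ha π hπ x
    simp only [Pi.smul_apply, ha π hπ x]

lemma mem_fixSub {S : Set (Equiv.Perm F)} {u : F → ZMod 2} :
    u ∈ fixSub S ↔ ∀ π ∈ S, ∀ x, u (π x) = u x := Iff.rfl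

lemma fix_apply_closure {S : Set (Equiv.Perm F)} {u : F → ZMod 2} (hu : u ∈ fixSub S) :
    ∀ g ∈ Subgroup.closure S, ∀ x, u (g x) = u x := by
  intro g hg
  induction hg using Subgroup.closure_induction with
  | mem π hπ => exact hu π hπ
  | one => intro x; rfl
  | mul a b ha hb iha ihb =>
    intro x
    rw [Equiv.Perm.mul_apply, iha, ihb]
  | inv a ha ih =>
    intro x
    have h1 := ih (a⁻¹ x)
    rw [← Equiv.Perm.mul_apply, mul_inv_cancel, Equiv.Perm.one_apply] at h1
    exact h1.symm

lemma fix_eq_of_rel {S : Set (Equiv.Perm F)} {u : F → ZMod 2} (hu : u ∈ fixSub S) {x y : F}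
    (h : (MulAction.orbitRel (Subgroup.closure S) F).r x y) : u x = u y := by
  obtain ⟨g, rfl⟩ := h
  exact fix_apply_closure hu g.1 g.2 y

/-- Quotient type whose cardinality is `orbCount S`. -/
abbrev QT (S : Set (Equiv.Perm F)) : Type _ := MulAction.orbitRel.Quotient (Subgroup.closure S) F

lemma QT_mk_out (S : Set (Equiv.Perm F)) (q : QT S) :
    (Quotient.mk'' (Quotient.out q) : QT S) = q := Quotient.out_eq' q

lemma QT_mk_apply (S : Set (Equiv.Perm F)) {π : Equiv.Perm F} (hπ : π ∈ S) (x : F) :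
    (Quotient.mk'' (π x) : QT S) = Quotient.mk'' x := by
  apply Quotient.sound'
  exact ⟨⟨π, Subgroup.subset_closure hπ⟩, rfl⟩

noncomputable def fixEquiv (S : Set (Equiv.Perm F)) : (QT S → ZMod 2) ≃ₗ[ZMod 2] fixSub S where
  toFun v := ⟨fun x => v (Quotient.mk'' x), by
    intro π hπ x
    show v (Quotient.mk'' (π x)) = v (Quotient.mk'' x)
    rw [QT_mk_apply S hπ x]⟩
  map_add' a b := rfl
  map_smul' c a := rfl
  invFun u q := Quotient.liftOn' q u.1 (fun a b h => fix_eq_of_rel u.2 h)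
  left_inv v := by
    funext q
    induction q using Quotient.inductionOn'
    rfl
  right_inv u := rfl

lemma finrank_fixSub (S : Set (Equiv.Perm F)) :
    finrank (ZMod 2) (fixSub S) = orbCount S := by
  classical
  letI : Fintype (QT S) := Fintype.ofFinite _
  rw [← (fixEquiv S).finrank_eq, Module.finrank_pi, orbCount, Nat.card_eq_fintype_card]

/-- `u ↦ u + u ∘ π`. -/
def Tmap (π : Equiv.Perm F) : (F → ZMod 2) →ₗ[ZMod 2] (F → ZMod 2) where
  toFun u := u + fun y => u (π y)
  map_add' a b := by funext y; simp [Pi.add_apply]; ring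
  map_smul' c a := by funext y; simp [Pi.add_apply]; ring

lemma Tmap_apply (π : Equiv.Perm F) (u : F → ZMod 2) (y : F) :
    Tmap π u y = u y + u (π y) := rfl

section Comb

variable {θ σ' : Equiv.Perm F}

lemma fpf_sq {π : Equiv.Perm F} (h : FPF π) (x : F) : π (π x) = x := by
  have := congrArg (fun p : Equiv.Perm F => p x) h.1
  simpa using this

variable (hθ : FPF θ) (hσ : FPF σ')
  (h4 : ∀ x : F, Nat.card (orbSet {θ, σ'} x) = 4)

include hθ hσ h4

lemma theta_ne_sigma (x : F) : θ x ≠ σ' x := by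
  intro heq
  have hsub : ∀ g ∈ Subgroup.closure ({θ, σ'} : Set (Equiv.Perm F)),
      g x ∈ ({x, θ x} : Set F) ∧ g (θ x) ∈ ({x, θ x} : Set F) := by
    intro g hg
    induction hg using Subgroup.closure_induction with
    | mem π hπ =>
      rcases hπ with h | h
      · subst h
        exact ⟨Or.inr rfl, Or.inl (fpf_sq hθ x)⟩
      · rw [Set.mem_singleton_iff] at h
        subst h
        constructor
        · exact Or.inr heq.symm
        · rw [heq, fpf_sq hσ x]
          exact Or.inl rfl
    | one => exact ⟨Or.inl rfl, Or.inr rfl⟩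
    | mul a b ha hb iha ihb =>
      constructor
      · rw [Equiv.Perm.mul_apply]
        rcases ihb.1 with h | h
        · rw [h]; exact iha.1
        · rw [Set.mem_singleton_iff] at h; rw [h]; exact iha.2
      · rw [Equiv.Perm.mul_apply]
        rcases ihb.2 with h | h
        · rw [h]; exact iha.1
        · rw [Set.mem_singleton_iff] at h; rw [h]; exact iha.2
    | inv a ha ih =>
      simp only [Set.mem_insert_iff, Set.mem_singleton_iff] at ih ⊢
      have hne : x ≠ θ x := (hθ.2 x).symm
      rcases ih with ⟨h1 | h1, h2 | h2⟩
      · exact absurd (a.injective (h1.trans h2.symm)) hne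
      · refine ⟨Or.inl ?_, Or.inr ?_⟩
        · exact a.injective (by rw [← Equiv.Perm.mul_apply, mul_inv_cancel, Equiv.Perm.one_apply, h1])
        · exact a.injective (by rw [← Equiv.Perm.mul_apply, mul_inv_cancel, Equiv.Perm.one_apply, h2])
      · refine ⟨Or.inr ?_, Or.inl ?_⟩
        · exact a.injective (by rw [← Equiv.Perm.mul_apply, mul_inv_cancel, Equiv.Perm.one_apply, h2])
        · exact a.injective (by rw [← Equiv.Perm.mul_apply, mul_inv_cancel, Equiv.Perm.one_apply, h1])
      · exact absurd (a.injective (h1.trans h2.symm)) hne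
  have horb : orbSet {θ, σ'} x ⊆ ({x, θ x} : Set F) := by
    rintro y ⟨g, rfl⟩
    exact (hsub g.1 g.2).1
  have hcard : Nat.card (orbSet {θ, σ'} x) ≤ 2 := by
    rw [Nat.card_coe_set_eq]
    calc (orbSet {θ, σ'} x).ncard ≤ ({x, θ x} : Set F).ncard :=
          Set.ncard_le_ncard horb (Set.toFinite _)
      _ ≤ 2 := (Set.ncard_insert_le _ _).trans (by simp)
  rw [h4 x] at hcard
  omega

lemma distinct4 (x : F) :
    θ x ≠ x ∧ σ' x ≠ x ∧ σ' x ≠ θ x ∧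
    σ' (θ x) ≠ x ∧ σ' (θ x) ≠ θ x ∧ σ' (θ x) ≠ σ' x := by
  refine ⟨hθ.2 x, hσ.2 x, fun h => theta_ne_sigma hθ hσ h4 x h.symm, ?_, ?_, ?_⟩
  · intro h
    apply theta_ne_sigma hθ hσ h4 x
    have h2 := congrArg σ' h
    rw [fpf_sq hσ (θ x)] at h2
    exact h2
  · exact hσ.2 (θ x)
  · intro h
    exact hθ.2 x (σ'.injective h)

lemma mem_orbSet_self' (x : F) : x ∈ orbSet {θ, σ'} x := MulAction.mem_orbit_self x

lemma apply_mem_orbSet {π : Equiv.Perm F} (hπ : π ∈ ({θ, σ'} : Set (Equiv.Perm F))) (x : F) :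
    π x ∈ orbSet {θ, σ'} x :=
  ⟨⟨π, Subgroup.subset_closure hπ⟩, rfl⟩

lemma orbSet_eq (x : F) :
    orbSet {θ, σ'} x = ({x, θ x, σ' x, σ' (θ x)} : Set F) := by
  obtain ⟨d1, d2, d3, d4, d5, d6⟩ := distinct4 hθ hσ h4 x
  have hsub : ({x, θ x, σ' x, σ' (θ x)} : Set F) ⊆ orbSet {θ, σ'} x := by
    rintro y (rfl | rfl | rfl | rfl)
    · exact mem_orbSet_self' hθ hσ h4 _
    · exact apply_mem_orbSet hθ hσ h4 (Or.inl rfl) _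
    · exact apply_mem_orbSet hθ hσ h4 (Or.inr rfl) _
    · exact ⟨⟨σ' * θ, Subgroup.mul_mem _ (Subgroup.subset_closure (Or.inr rfl))
        (Subgroup.subset_closure (Or.inl rfl))⟩, rfl⟩
  have hcard4 : ({x, θ x, σ' x, σ' (θ x)} : Set F).ncard = 4 := by
    have m1 : x ∉ ({θ x, σ' x, σ' (θ x)} : Set F) := by
      simp only [Set.mem_insert_iff, Set.mem_singleton_iff]
      push_neg
      exact ⟨Ne.symm d1, Ne.symm d2, Ne.symm d4⟩
    have m2 : θ x ∉ ({σ' x, σ' (θ x)} : Set F) := by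
      simp only [Set.mem_insert_iff, Set.mem_singleton_iff]
      push_neg
      exact ⟨Ne.symm d3, Ne.symm d5⟩
    have m3 : σ' x ∉ ({σ' (θ x)} : Set F) := by
      simp only [Set.mem_singleton_iff]
      exact Ne.symm d6
    rw [Set.ncard_insert_of_notMem m1 (Set.toFinite _),
        Set.ncard_insert_of_notMem m2 (Set.toFinite _),
        Set.ncard_insert_of_notMem m3 (Set.toFinite _),
        Set.ncard_singleton]
  refine (Set.eq_of_subset_of_ncard_le hsub ?_ (Set.toFinite _)).symm
  rw [hcard4, ← Nat.card_coe_set_eq, h4 x]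

lemma comm_ts (x : F) : θ (σ' x) = σ' (θ x) := by
  obtain ⟨d1, d2, d3, d4, d5, d6⟩ := distinct4 hθ hσ h4 x
  have hmem : θ (σ' x) ∈ orbSet {θ, σ'} x :=
    ⟨⟨θ * σ', Subgroup.mul_mem _ (Subgroup.subset_closure (Or.inl rfl))
      (Subgroup.subset_closure (Or.inr rfl))⟩, rfl⟩
  rw [orbSet_eq hθ hσ h4 x] at hmem
  rcases hmem with h | h | h | h
  · exfalso
    have := congrArg θ h
    rw [fpf_sq hθ (σ' x)] at this
    exact d3 this
  · exfalso
    exact d2 (θ.injective h)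
  · exact absurd h (hθ.2 (σ' x))
  · exact h

end Comb

lemma z2_add_self (a : ZMod 2) : a + a = 0 := by revert a; decide

lemma z2_eq_of_add_eq_zero {a b : ZMod 2} (h : a + b = 0) : b = a := by revert h; revert a b; decide

/-- Rank–nullity for `Tmap π` restricted to an invariant subspace. -/
lemma rank_split (π : Equiv.Perm F) (Sv Sc : Set (Equiv.Perm F))
    (heq : ∀ u : F → ZMod 2, u ∈ fixSub Sc ↔ u ∈ fixSub Sv ∧ ∀ x, u (π x) = u x) :
    finrank (ZMod 2) (fixSub Sv)
      = finrank (ZMod 2) ((fixSub Sv).map (Tmap π)) + finrank (ZMod 2) (fixSub Sc) := by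
  have h1 := LinearMap.finrank_range_add_finrank_ker ((Tmap π).domRestrict (fixSub Sv))
  rw [LinearMap.range_domRestrict] at h1
  have e : (LinearMap.ker ((Tmap π).domRestrict (fixSub Sv))) ≃ₗ[ZMod 2] fixSub Sc :=
    { toFun := fun w => ⟨w.1.1, (heq w.1.1).mpr ⟨w.1.2, fun x => by
        have h2 := congrFun (LinearMap.mem_ker.mp w.2) x
        exact z2_eq_of_add_eq_zero h2⟩⟩
      map_add' := fun _ _ => rfl
      map_smul' := fun _ _ => rfl
      invFun := fun u => ⟨⟨u.1, ((heq u.1).mp u.2).1⟩, by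
        rw [LinearMap.mem_ker]
        funext x
        show u.1 x + u.1 (π x) = 0
        rw [((heq u.1).mp u.2).2 x]
        exact z2_add_self _⟩
      left_inv := fun w => Subtype.ext (Subtype.ext rfl)
      right_inv := fun u => Subtype.ext rfl }
  rw [e.finrank_eq] at h1
  omega

section Pairing

variable (S : Set (Equiv.Perm F)) [Fintype (QT S)] [DecidableEq (QT S)]

noncomputable def bform : (F → ZMod 2) →ₗ[ZMod 2] (F → ZMod 2) →ₗ[ZMod 2] ZMod 2 :=
  LinearMap.mk₂ (ZMod 2) (fun u w => ∑ q : QT S, u (Quotient.out q) * w (Quotient.out q))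
    (fun m₁ m₂ n => by simp [add_mul, Finset.sum_add_distrib])
    (fun c m n => by simp [Finset.mul_sum, mul_assoc])
    (fun m n₁ n₂ => by simp [mul_add, Finset.sum_add_distrib])
    (fun c m n => by
      simp only [Pi.smul_apply, smul_eq_mul, Finset.mul_sum]
      congr 1; funext q; ring)

lemma bform_apply (u w : F → ZMod 2) :
    bform S u w = ∑ q : QT S, u (Quotient.out q) * w (Quotient.out q) := rfl

lemma indicator_mem (x : F) :
    (fun y => if (Quotient.mk'' y : QT S) = Quotient.mk'' x then (1 : ZMod 2) else 0) ∈ fixSub S := by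
  intro π hπ y
  simp only
  rw [QT_mk_apply S hπ y]

lemma bform_indicator (w : F → ZMod 2) (hw : w ∈ fixSub S) (x : F) :
    bform S (fun y => if (Quotient.mk'' y : QT S) = Quotient.mk'' x then 1 else 0) w = w x := by
  classical
  rw [bform_apply]
  have h1 : ∀ q : QT S,
      (if (Quotient.mk'' (Quotient.out q) : QT S) = Quotient.mk'' x then (1 : ZMod 2) else 0)
        * w (Quotient.out q)
      = if q = Quotient.mk'' x then w (Quotient.out q) else 0 := by
    intro q
    rw [Quotient.out_eq']
    split <;> simp
  simp only [h1]
  rw [Finset.sum_ite_eq' Finset.univ (Quotient.mk'' x : QT S) (fun q => w (Quotient.out q))]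
  simp only [Finset.mem_univ, if_true]
  exact fix_eq_of_rel hw (Quotient.exact' (Quotient.out_eq' _))

lemma finrank_map_add_le
    {A B : Submodule (ZMod 2) (F → ZMod 2)} (hAE : A ≤ fixSub S) (hBE : B ≤ fixSub S)
    (horth : ∀ u ∈ A, ∀ w ∈ B, bform S u w = 0) :
    finrank (ZMod 2) A + finrank (ZMod 2) B ≤ finrank (ZMod 2) (fixSub S) := by
  set ZE := fixSub S with hZE
  let Θ : ZE →ₗ[ZMod 2] (ZE →ₗ[ZMod 2] ZMod 2) :=
    LinearMap.mk₂ (ZMod 2) (fun w u => bform S u.1 w.1)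
      (fun w₁ w₂ u => by
        show bform S u.1 (w₁.1 + w₂.1) = bform S u.1 w₁.1 + bform S u.1 w₂.1
        exact map_add _ _ _)
      (fun c w u => by
        show bform S u.1 (c • w.1) = c • bform S u.1 w.1
        exact map_smul _ _ _)
      (fun w u₁ u₂ => by
        show bform S (u₁.1 + u₂.1) w.1 = bform S u₁.1 w.1 + bform S u₂.1 w.1
        rw [map_add]; rfl)
      (fun c w u => by
        show bform S (c • u.1) w.1 = c • bform S u.1 w.1
        rw [map_smul]; rfl)
  have hΘapp : ∀ w u, Θ w u = bform S u.1 w.1 := fun _ _ => rfl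
  have hinj : Function.Injective Θ := by
    rw [injective_iff_map_eq_zero]
    intro w hw
    apply Subtype.ext
    funext x
    have h2 : Θ w ⟨_, indicator_mem S x⟩ = 0 := by rw [hw]; rfl
    rw [hΘapp, bform_indicator S w.1 w.2 x] at h2
    exact h2
  have hsurj : Function.Surjective Θ :=
    (LinearMap.injective_iff_surjective_of_finrank_eq_finrank
      Subspace.dual_finrank_eq.symm).mp hinj
  let ψ : ZE →ₗ[ZMod 2] Module.Dual (ZMod 2) A :=
    (Submodule.inclusion hAE).dualMap.comp Θ
  have hψsurj : Function.Surjective ψ :=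
    (LinearMap.dualMap_surjective_of_injective (Submodule.inclusion_injective hAE)).comp hsurj
  have h5 := LinearMap.finrank_range_add_finrank_ker ψ
  rw [LinearMap.range_eq_top.mpr hψsurj, finrank_top, Subspace.dual_finrank_eq] at h5
  have hBker : Submodule.comap ZE.subtype B ≤ LinearMap.ker ψ := by
    intro w hw
    rw [LinearMap.mem_ker]
    apply LinearMap.ext
    intro a
    show Θ w (Submodule.inclusion hAE a) = 0
    rw [hΘapp]
    exact horth _ a.2 _ hw
  have hBeq : finrank (ZMod 2) (Submodule.comap ZE.subtype B) = finrank (ZMod 2) B :=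
    (Submodule.comapSubtypeEquivOfLe hBE).finrank_eq
  have h6 : finrank (ZMod 2) B ≤ finrank (ZMod 2) (LinearMap.ker ψ) := by
    rw [← hBeq]
    exact Submodule.finrank_mono hBker
  omega

end Pairing

section Main

variable {θ σ' φ' : Equiv.Perm F}
variable (hθ : FPF θ) (hσ : FPF σ') (hφ : FPF φ')
  (h4 : ∀ x : F, Nat.card (orbSet {θ, σ'} x) = 4)

include hθ hσ h4 in
lemma map_T_le_E : (fixSub {σ', φ'}).map (Tmap θ) ≤ fixSub ({θ, σ'} : Set (Equiv.Perm F)) := by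
  rintro _ ⟨g, hg, rfl⟩
  have gs : ∀ y, g (σ' y) = g y := hg σ' (Set.mem_insert _ _)
  intro π hπ x
  rcases hπ with rfl | hπ
  · rw [Tmap_apply, Tmap_apply, fpf_sq hθ x, add_comm]
  · rw [Set.mem_singleton_iff] at hπ
    subst hπ
    rw [Tmap_apply, Tmap_apply, gs x, comm_ts hθ hσ h4 x, gs (θ x)]

include hθ hσ h4 in
lemma map_S_le_E : (fixSub {θ, φ'}).map (Tmap σ') ≤ fixSub ({θ, σ'} : Set (Equiv.Perm F)) := by
  rintro _ ⟨k, hk, rfl⟩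
  have kt : ∀ y, k (θ y) = k y := hk θ (Set.mem_insert _ _)
  intro π hπ x
  rcases hπ with rfl | hπ
  · rw [Tmap_apply, Tmap_apply, kt x, ← comm_ts hθ hσ h4 x, kt (σ' x)]
  · rw [Set.mem_singleton_iff] at hπ
    subst hπ
    rw [Tmap_apply, Tmap_apply, fpf_sq hσ x, add_comm]

lemma fix_triple_iff_V (u : F → ZMod 2) :
    u ∈ fixSub {θ, σ', φ'} ↔ u ∈ fixSub {σ', φ'} ∧ ∀ x, u (θ x) = u x := by
  constructor
  · intro hu
    exact ⟨fun π hπ => hu π (Set.mem_insert_of_mem _ hπ), hu θ (Set.mem_insert _ _)⟩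
  · rintro ⟨hu, ht⟩ π hπ
    rcases hπ with rfl | hπ
    · exact ht
    · exact hu π hπ

lemma fix_triple_iff_F (u : F → ZMod 2) :
    u ∈ fixSub {θ, σ', φ'} ↔ u ∈ fixSub {θ, φ'} ∧ ∀ x, u (σ' x) = u x := by
  constructor
  · intro hu
    refine ⟨fun π hπ => ?_, hu σ' (Set.mem_insert_of_mem _ (Set.mem_insert _ _))⟩
    rcases hπ with rfl | hπ
    · exact hu π (Set.mem_insert _ _)
    · rw [Set.mem_singleton_iff] at hπ
      subst hπ
      exact hu π (Set.mem_insert_of_mem _ (Set.mem_insert_of_mem _ rfl))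
  · rintro ⟨hu, ht⟩ π hπ
    rcases hπ with rfl | hπ
    · exact hu π (Set.mem_insert _ _)
    · rcases hπ with rfl | hπ
      · exact ht
      · rw [Set.mem_singleton_iff] at hπ
        subst hπ
        exact hu π (Set.mem_insert_of_mem _ rfl)

include hθ hσ hφ h4 in
lemma orth_main [Fintype (QT ({θ, σ'} : Set (Equiv.Perm F)))]
    [DecidableEq (QT ({θ, σ'} : Set (Equiv.Perm F)))] :
    ∀ u ∈ (fixSub {σ', φ'}).map (Tmap θ), ∀ w ∈ (fixSub {θ, φ'}).map (Tmap σ'),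
      bform ({θ, σ'} : Set (Equiv.Perm F)) u w = 0 := by
  classical
  rintro _ ⟨g, hg, rfl⟩ _ ⟨k, hk, rfl⟩
  have gs : ∀ y, g (σ' y) = g y := hg σ' (Set.mem_insert _ _)
  have gf : ∀ y, g (φ' y) = g y := hg φ' (Set.mem_insert_of_mem _ rfl)
  have kt : ∀ y, k (θ y) = k y := hk θ (Set.mem_insert _ _)
  have kf : ∀ y, k (φ' y) = k y := hk φ' (Set.mem_insert_of_mem _ rfl)
  have key : ∀ q : QT ({θ, σ'} : Set (Equiv.Perm F)),
      (Tmap θ g) (Quotient.out q) * (Tmap σ' k) (Quotient.out q)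
        = ∑ y : {y : F // (Quotient.mk'' y : QT ({θ, σ'} : Set (Equiv.Perm F))) = q},
            g y.1 * k y.1 := by
    intro q
    obtain ⟨d1, d2, d3, d4, d5, d6⟩ := distinct4 hθ hσ h4 (Quotient.out q)
    set x := Quotient.out q with hxdef
    have hmemiff : ∀ y : F, y ∈ ({x, θ x, σ' x, σ' (θ x)} : Finset F) ↔
        (Quotient.mk'' y : QT ({θ, σ'} : Set (Equiv.Perm F))) = q := by
      intro y
      simp only [Finset.mem_insert, Finset.mem_singleton]
      have e0 : (Quotient.mk'' x : QT ({θ, σ'} : Set (Equiv.Perm F))) = q := QT_mk_out _ q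
      have e1 : (Quotient.mk'' (θ x) : QT ({θ, σ'} : Set (Equiv.Perm F))) = q :=
        (QT_mk_apply ({θ, σ'} : Set (Equiv.Perm F)) (Set.mem_insert _ _) x).trans e0
      have e2 : (Quotient.mk'' (σ' x) : QT ({θ, σ'} : Set (Equiv.Perm F))) = q :=
        (QT_mk_apply ({θ, σ'} : Set (Equiv.Perm F)) (Set.mem_insert_of_mem _ rfl) x).trans e0
      have e3 : (Quotient.mk'' (σ' (θ x)) : QT ({θ, σ'} : Set (Equiv.Perm F))) = q :=
        (QT_mk_apply ({θ, σ'} : Set (Equiv.Perm F)) (Set.mem_insert_of_mem _ rfl) (θ x)).trans e1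
      constructor
      · rintro (rfl | rfl | rfl | rfl)
        · exact e0
        · exact e1
        · exact e2
        · exact e3
      · intro hy
        have hrel : y ∈ orbSet ({θ, σ'} : Set (Equiv.Perm F)) x := by
          have h7 : (Quotient.mk'' y : QT ({θ, σ'} : Set (Equiv.Perm F))) = Quotient.mk'' x :=
            hy.trans e0.symm
          exact Quotient.exact' h7
        rw [orbSet_eq hθ hσ h4 x] at hrel
        simpa using hrel
    rw [← Finset.sum_subtype _ hmemiff (fun y => g y * k y)]
    have m1 : x ∉ ({θ x, σ' x, σ' (θ x)} : Finset F) := by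
      simp only [Finset.mem_insert, Finset.mem_singleton]
      push_neg
      exact ⟨Ne.symm d1, Ne.symm d2, Ne.symm d4⟩
    have m2 : θ x ∉ ({σ' x, σ' (θ x)} : Finset F) := by
      simp only [Finset.mem_insert, Finset.mem_singleton]
      push_neg
      exact ⟨Ne.symm d3, Ne.symm d5⟩
    have m3 : σ' x ∉ ({σ' (θ x)} : Finset F) := by
      simp only [Finset.mem_singleton]
      exact Ne.symm d6
    rw [Finset.sum_insert m1, Finset.sum_insert m2, Finset.sum_insert m3,
        Finset.sum_singleton]
    have e4 : g x * k (σ' x) = g (σ' x) * k (σ' x) := by rw [gs]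
    have e5 : g (θ x) * k x = g (θ x) * k (θ x) := by rw [kt]
    have e6 : g (θ x) * k (σ' x) = g (σ' (θ x)) * k (σ' (θ x)) := by
      rw [gs (θ x), ← comm_ts hθ hσ h4 x, kt (σ' x)]
    rw [Tmap_apply, Tmap_apply, add_mul, mul_add, mul_add, e4, e5, e6]
    ring
  rw [bform_apply]
  simp only [key]
  rw [Fintype.sum_fiberwise (fun y : F => (Quotient.mk'' y : QT ({θ, σ'} : Set (Equiv.Perm F))))
      (fun y => g y * k y)]
  apply Finset.sum_involution (fun y _ => φ' y)
  · intro a _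
    rw [gf, kf]
    exact z2_add_self _
  · intro a _ _
    exact hφ.2 a
  · intro a _
    exact Finset.mem_univ _
  · intro a _
    exact fpf_sq hφ a


end Main

end Stmt8Aux

open Module in
theorem stmt8 {F : Type*} [Fintype F]
    (θ σ' φ' : Equiv.Perm F) (h : IsGraphEmb θ σ' φ') :
    0 ≤ genus θ σ' φ' := by
  classical
  obtain ⟨hθ, hσ, hφ, h4⟩ := h
  letI : Fintype (Stmt8Aux.QT ({θ, σ'} : Set (Equiv.Perm F))) := Fintype.ofFinite _
  have hV := Stmt8Aux.rank_split θ ({σ', φ'} : Set (Equiv.Perm F))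
    ({θ, σ', φ'} : Set (Equiv.Perm F)) (fun u => Stmt8Aux.fix_triple_iff_V u)
  have hF := Stmt8Aux.rank_split σ' ({θ, φ'} : Set (Equiv.Perm F))
    ({θ, σ', φ'} : Set (Equiv.Perm F)) (fun u => Stmt8Aux.fix_triple_iff_F u)
  have hle := Stmt8Aux.finrank_map_add_le ({θ, σ'} : Set (Equiv.Perm F))
    (Stmt8Aux.map_T_le_E hθ hσ h4) (Stmt8Aux.map_S_le_E hθ hσ h4)
    (Stmt8Aux.orth_main hθ hσ hφ h4)
  rw [Stmt8Aux.finrank_fixSub] at hV hF hle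
  rw [Stmt8Aux.finrank_fixSub] at hV hF
  unfold genus
  omega
end

section
/- Edge deletion changes the orbit counts by bounded amounts: if E₀ = E − e for an edge e of a graph embedding E, then #edges(E) − #edges(E₀) = 1, #vertices(E) − #vertices(E₀) ∈ {0,1,2}, #faces(E) − #faces(E₀) ∈ {−1,0,1,2}, and #components(E) − #components(E₀) ∈ {−1,0,1}. -/
open MulAction Equiv

section helpers
variable {X : Type*}

lemma mem_orbSet_self (S : Set (Equiv.Perm X)) (x : X) : x ∈ orbSet S x :=
  MulAction.mem_orbit_self x

lemma smul_mem_orbSet {S : Set (Equiv.Perm X)} {g : Equiv.Perm X}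
    (hg : g ∈ Subgroup.closure S) {x y : X} (hy : y ∈ orbSet S x) : g y ∈ orbSet S x := by
  obtain ⟨h, rfl⟩ := hy
  exact ⟨⟨g, hg⟩ * h, by simp [Subgroup.smul_def, Equiv.Perm.smul_def, mul_smul]⟩

lemma orbSet_eq_of_mem {S : Set (Equiv.Perm X)} {x y : X} (hy : y ∈ orbSet S x) :
    orbSet S y = orbSet S x :=
  MulAction.orbit_eq_iff.mpr hy

lemma fwd_inv [Finite X] (g : Equiv.Perm X) (T : Set X) (h : ∀ y ∈ T, g y ∈ T) :
    ∀ y ∈ T, g⁻¹ y ∈ T := by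
  have himg : (fun y => g y) '' T = T := by
    apply Set.eq_of_subset_of_ncard_le
    · rintro _ ⟨y, hy, rfl⟩; exact h y hy
    · rw [Set.ncard_image_of_injective _ g.injective]
    · exact Set.toFinite _
  intro y hy
  rw [← himg] at hy
  obtain ⟨z, hz, hzy⟩ := hy
  have : g⁻¹ y = z := by rw [← hzy]; simp
  rwa [this]

lemma orbSet_subset [Finite X] {S : Set (Equiv.Perm X)} (T : Set X)
    (hT : ∀ g ∈ S, ∀ y ∈ T, g y ∈ T) {x : X} (hx : x ∈ T) : orbSet S x ⊆ T := by
  rintro _ ⟨⟨g, hg⟩, rfl⟩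
  have key : ∀ y ∈ T, g y ∈ T := by
    induction hg using Subgroup.closure_induction with
    | mem g' hg' => exact hT g' hg'
    | one => intro y hy; simpa using hy
    | mul a b ha hb iha ihb => intro y hy; simpa [Equiv.Perm.mul_apply] using iha _ (ihb y hy)
    | inv a ha iha => exact fwd_inv a T iha
  simpa [Subgroup.smul_def, Equiv.Perm.smul_def] using key x hx

lemma zpow_nat {G : Type*} [Group G] [Finite G] (g : G) (k : ℤ) : ∃ n : ℕ, g ^ k = g ^ n := by
  refine ⟨(k % (orderOf g : ℤ)).toNat, ?_⟩
  rw [← zpow_natCast, Int.toNat_of_nonneg (Int.emod_nonneg k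
    (by exact_mod_cast (orderOf_pos g).ne')), zpow_mod_orderOf]

lemma mk_eq_of_mem {S : Set (Equiv.Perm X)} {x y : X} (h : y ∈ orbSet S x) :
    (Quotient.mk'' y : MulAction.orbitRel.Quotient (Subgroup.closure S) X) = Quotient.mk'' x :=
  Quotient.sound' (MulAction.orbitRel_apply.mpr h)

lemma mem_of_mk_eq {S : Set (Equiv.Perm X)} {x y : X}
    (h : (Quotient.mk'' y : MulAction.orbitRel.Quotient (Subgroup.closure S) X) = Quotient.mk'' x) :
    y ∈ orbSet S x :=
  MulAction.orbitRel_apply.mp (Quotient.eq''.mp h)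

lemma orbit_out {S : Set (Equiv.Perm X)}
    (c : MulAction.orbitRel.Quotient (Subgroup.closure S) X) :
    c.orbit = orbSet S (Quotient.out c) :=
  MulAction.orbitRel.Quotient.orbit_eq_orbit_out c Quotient.out_eq'

lemma dihedral_mem [Finite X] {σ φ : Equiv.Perm X} (hσ : σ * σ = 1) (hφ : φ * φ = 1)
    {z y : X} (hy : y ∈ orbSet {σ, φ} z) :
    ∃ k : ℕ, y = ((σ * φ) ^ k) z ∨ y = ((σ * φ) ^ k) (σ z) := by
  set ρ := σ * φ with hρ
  have hσinv : σ⁻¹ = σ := inv_eq_of_mul_eq_one_right hσ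
  have hφinv : φ⁻¹ = φ := inv_eq_of_mul_eq_one_right hφ
  have hbase : σ * ρ * σ⁻¹ = ρ⁻¹ := by
    rw [hσinv, hρ, mul_inv_rev, hσinv, hφinv, ← mul_assoc, hσ, one_mul]
  have hconj : ∀ k : ℤ, σ * ρ ^ k = ρ ^ (-k) * σ := by
    intro k
    have : (σ * ρ * σ⁻¹) ^ k = ρ ^ (-k) := by rw [hbase, inv_zpow, zpow_neg]
    rw [conj_zpow] at this
    calc σ * ρ ^ k = σ * ρ ^ k * σ⁻¹ * σ := by rw [mul_assoc, inv_mul_cancel, mul_one]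
    _ = ρ ^ (-k) * σ := by rw [this]
  have hφρ : ∀ k : ℤ, φ * ρ ^ k = ρ ^ (-k-1) * σ := by
    intro k
    have h1 : φ = σ * ρ := by rw [hρ, ← mul_assoc, hσ, one_mul]
    rw [h1, mul_assoc, ← zpow_one_add, show (1 : ℤ) + k = -(-k-1) by ring, hconj, neg_neg]
  have hsub : orbSet {σ, φ} z ⊆
      {y | ∃ k : ℤ, y = (ρ ^ k) z ∨ y = (ρ ^ k) (σ z)} := by
    apply orbSet_subset
    · rintro g hg w ⟨k, hw | hw⟩
      · have hg' : g = σ ∨ g = φ := hg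
        rcases hg' with h' | h'
        · refine ⟨-k, Or.inr ?_⟩
          rw [h', hw, ← Equiv.Perm.mul_apply, hconj k, Equiv.Perm.mul_apply]
        · refine ⟨-k-1, Or.inr ?_⟩
          rw [h', hw, ← Equiv.Perm.mul_apply, hφρ k, Equiv.Perm.mul_apply]
      · have hg' : g = σ ∨ g = φ := hg
        rcases hg' with h' | h'
        · refine ⟨-k, Or.inl ?_⟩
          rw [h', hw, ← Equiv.Perm.mul_apply, hconj k, Equiv.Perm.mul_apply,
            ← Equiv.Perm.mul_apply σ σ, hσ]
          simp
        · refine ⟨-k-1, Or.inl ?_⟩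
          rw [h', hw, ← Equiv.Perm.mul_apply, hφρ k, Equiv.Perm.mul_apply,
            ← Equiv.Perm.mul_apply σ σ, hσ]
          simp
    · exact ⟨0, Or.inl (by simp)⟩
  obtain ⟨k, hk⟩ := hsub hy
  obtain ⟨n, hn⟩ := zpow_nat ρ k
  exact ⟨n, by rwa [hn] at hk⟩

end helpers
section del
variable {F : Type*} [Fintype F] {θ σ' φ' : Equiv.Perm F} {e : Set F}
  {θ₀ σ₀ φ₀ : Equiv.Perm {f : F // f ∉ e}}

lemma phi0_spec (hdel : IsEdgeDeletion σ' φ' e θ₀ σ₀ φ₀ θ) (p : {f : F // f ∉ e}) {m : ℕ}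
    (h1 : ((φ' * σ') ^ m) (φ' (p : F)) ∉ e)
    (h2 : ∀ j < m, ((φ' * σ') ^ j) (φ' (p : F)) ∈ e) :
    (φ₀ p : F) = ((φ' * σ') ^ m) (φ' (p : F)) := by
  obtain ⟨m', hm1, hm2, hm3⟩ := hdel.2 p
  rcases lt_trichotomy m' m with h | h | h
  · exact absurd (h2 m' h) hm1
  · rw [hm3, h]
  · exact absurd (hm2 m h) h1

lemma phi0_of_not_mem (hdel : IsEdgeDeletion σ' φ' e θ₀ σ₀ φ₀ θ) (p : {f : F // f ∉ e})
    (hp : φ' (p : F) ∉ e) : (φ₀ p : F) = φ' (p : F) := by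
  have := phi0_spec (θ := θ) hdel p (m := 0) (by simpa using hp) (by omega)
  simpa using this

lemma bad_phi_mem (hdel : IsEdgeDeletion σ' φ' e θ₀ σ₀ φ₀ θ) (p : {f : F // f ∉ e})
    (hp : (φ₀ p : F) ≠ φ' (p : F)) : φ' (p : F) ∈ e := by
  by_contra h
  exact hp (phi0_of_not_mem (θ := θ) hdel p h)

lemma pair_step (hdel : IsEdgeDeletion σ' φ' e θ₀ σ₀ φ₀ θ) (hφ : φ' * φ' = 1)
    {y : F} (hy : y ∈ e) {p q : {f : F // f ∉ e}}
    (hp : (p : F) = φ' y) (hq : (q : F) = φ' (σ' y)) : φ₀ p = q := by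
  have hφφ : ∀ z : F, φ' (φ' z) = z := by
    intro z
    have := congrFun (congrArg (fun (g : Equiv.Perm F) => (g : F → F)) hφ) z
    simpa [Equiv.Perm.mul_apply] using this
  have hpy : φ' (p : F) = y := by rw [hp, hφφ]
  apply Subtype.ext
  have h1 : ((φ' * σ') ^ 1) (φ' (p : F)) ∉ e := by
    simpa [hpy, ← hq] using q.2
  have h2 : ∀ j < 1, ((φ' * σ') ^ j) (φ' (p : F)) ∈ e := by
    intro j hj
    interval_cases j
    simpa [hpy] using hy
  rw [phi0_spec (θ := θ) hdel p h1 h2, hq]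
  simp [hpy]

lemma rho_pow_succ (σ' φ' : Equiv.Perm F) (j : ℕ) :
    (σ' * φ') ^ (j + 1) = σ' * ((φ' * σ') ^ j * φ') := by
  induction j with
  | zero => simp [pow_succ]
  | succ j ih =>
    rw [pow_succ, ih, pow_succ]
    simp only [mul_assoc]

lemma R0_step (hdel : IsEdgeDeletion σ' φ' e θ₀ σ₀ φ₀ θ) (hσe : ∀ y ∈ e, σ' y ∈ e)
    (p : {f : F // f ∉ e}) :
    ∃ m : ℕ, ((σ₀ (φ₀ p)) : F) = ((σ' * φ') ^ (m + 1)) (p : F) ∧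
      ∀ i, 1 ≤ i → i ≤ m → ((σ' * φ') ^ i) (p : F) ∈ e := by
  obtain ⟨m, hm1, hm2, hm3⟩ := hdel.2 p
  refine ⟨m, ?_, ?_⟩
  · rw [(hdel.1 (φ₀ p)).2, hm3, rho_pow_succ]
    simp [Equiv.Perm.mul_apply]
  · intro i h1 h2
    obtain ⟨j, rfl⟩ : ∃ j, i = j + 1 := ⟨i - 1, by omega⟩
    rw [rho_pow_succ]
    simp only [Equiv.Perm.mul_apply]
    exact hσe _ (hm2 j (by omega))

lemma FR_lemma (hdel : IsEdgeDeletion σ' φ' e θ₀ σ₀ φ₀ θ) (hσe : ∀ y ∈ e, σ' y ∈ e) :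
    ∀ n : ℕ, ∀ p q : {f : F // f ∉ e}, ((σ' * φ') ^ n) (p : F) = (q : F) →
      q ∈ orbSet {σ₀, φ₀} p := by
  intro n
  induction n using Nat.strong_induction_on with
  | _ n ih =>
    intro p q hq
    rcases Nat.eq_zero_or_pos n with rfl | hn
    · have : p = q := Subtype.ext (by simpa using hq)
      rw [← this]; exact mem_orbSet_self _ _
    obtain ⟨m, hc, hchain⟩ := R0_step (θ := θ) hdel hσe p
    have hle : m + 1 ≤ n := by
      by_contra hlt
      exact q.2 (hq ▸ hchain n hn (by omega))
    have hsplit : ((σ' * φ') ^ (n - (m+1))) ((σ₀ (φ₀ p)) : F) = (q : F) := by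
      rw [hc, ← Equiv.Perm.mul_apply, ← pow_add]
      rw [show n - (m+1) + (m+1) = n from by omega]
      exact hq
    have hmem := ih (n - (m+1)) (by omega) _ q hsplit
    have hstep : σ₀ (φ₀ p) ∈ orbSet {σ₀, φ₀} p := by
      have h1 : φ₀ p ∈ orbSet {σ₀, φ₀} p :=
        smul_mem_orbSet (Subgroup.subset_closure (by simp)) (mem_orbSet_self _ _)
      exact smul_mem_orbSet (Subgroup.subset_closure (by simp)) h1
    rw [orbSet_eq_of_mem hstep] at hmem
    exact hmem

lemma vertex_lift (hdel : IsEdgeDeletion σ' φ' e θ₀ σ₀ φ₀ θ)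
    (hσ : σ' * σ' = 1) (hφ : φ' * φ' = 1) (hσe : ∀ y ∈ e, σ' y ∈ e)
    {p q : {f : F // f ∉ e}} (hpq : (q : F) ∈ orbSet {σ', φ'} (p : F)) :
    q ∈ orbSet {σ₀, φ₀} p := by
  obtain ⟨k, hk | hk⟩ := dihedral_mem hσ hφ hpq
  · exact FR_lemma (θ := θ) hdel hσe k p q hk.symm
  · have hσp : ((σ₀ p : F)) = σ' (p : F) := (hdel.1 p).2
    have := FR_lemma (θ := θ) hdel hσe k (σ₀ p) q (by rw [hσp]; exact hk.symm)
    have hstep : σ₀ p ∈ orbSet {σ₀, φ₀} p :=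
      smul_mem_orbSet (Subgroup.subset_closure (by simp)) (mem_orbSet_self _ _)
    rwa [orbSet_eq_of_mem hstep] at this

lemma compatV (hdel : IsEdgeDeletion σ' φ' e θ₀ σ₀ φ₀ θ)
    {p q : {f : F // f ∉ e}} (hq : q ∈ orbSet {σ₀, φ₀} p) :
    (q : F) ∈ orbSet {σ', φ'} (p : F) := by
  have hsub : orbSet {σ₀, φ₀} p ⊆ {r | (r : F) ∈ orbSet {σ', φ'} (p : F)} := by
    apply orbSet_subset
    · rintro g hg r hr
      have hg' : g = σ₀ ∨ g = φ₀ := hg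
      rcases hg' with rfl | rfl
      · rw [Set.mem_setOf_eq, (hdel.1 r).2]
        exact smul_mem_orbSet (Subgroup.subset_closure (by simp)) hr
      · obtain ⟨m, _, _, hm3⟩ := hdel.2 r
        rw [Set.mem_setOf_eq, hm3]
        have h1 : (φ' * σ') ^ m * φ' ∈ Subgroup.closure ({σ', φ'} : Set (Equiv.Perm F)) := by
          apply mul_mem
          · exact pow_mem (mul_mem (Subgroup.subset_closure (by simp))
              (Subgroup.subset_closure (by simp))) m
          · exact Subgroup.subset_closure (by simp)
        have := smul_mem_orbSet h1 hr
        simpa [Equiv.Perm.mul_apply] using this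
    · exact mem_orbSet_self _ _
  exact hsub hq

end del
section master
set_option linter.unusedSectionVars false

variable {F : Type*} [Fintype F] {e : Set F} {ι : Type*}

def GoodPt {F : Type*} {e : Set F} {ι : Type*} (gs : ι → Equiv.Perm F)
    (gs₀ : ι → Equiv.Perm {f : F // f ∉ e}) (p : {f : F // f ∉ e}) : Prop :=
  ∀ i, ((gs₀ i p : F)) = gs i (p : F)

variable {gs : ι → Equiv.Perm F} {gs₀ : ι → Equiv.Perm {f : F // f ∉ e}}
  {S : Set (Equiv.Perm F)} {S₀ : Set (Equiv.Perm {f : F // f ∉ e})}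

lemma coe_orbit_subset (hS : S = Set.range gs) (hS₀ : S₀ = Set.range gs₀)
    {p : {f : F // f ∉ e}} (hgood : ∀ q ∈ orbSet S₀ p, GoodPt gs gs₀ q) :
    ∀ q ∈ orbSet S₀ p, (q : F) ∈ orbSet S (p : F) := by
  have hsub : orbSet S₀ p ⊆ {q | q ∈ orbSet S₀ p ∧ (q : F) ∈ orbSet S (p : F)} := by
    apply orbSet_subset
    · rintro g hg q ⟨hq1, hq2⟩
      rw [hS₀] at hg; obtain ⟨i, rfl⟩ := hg
      refine ⟨smul_mem_orbSet (Subgroup.subset_closure (by rw [hS₀]; exact ⟨i, rfl⟩)) hq1, ?_⟩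
      show ((gs₀ i q : F)) ∈ orbSet S (p : F)
      rw [hgood q hq1 i]
      exact smul_mem_orbSet (Subgroup.subset_closure (by rw [hS]; exact ⟨i, rfl⟩)) hq2
    · exact ⟨mem_orbSet_self _ _, mem_orbSet_self _ _⟩
  exact fun q hq => (hsub hq).2

lemma orbit_sub_coe (hS : S = Set.range gs) (hS₀ : S₀ = Set.range gs₀)
    {p : {f : F // f ∉ e}} (hgood : ∀ q ∈ orbSet S₀ p, GoodPt gs gs₀ q) :
    orbSet S (p : F) ⊆ Subtype.val '' orbSet S₀ p := by
  apply orbSet_subset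
  · rintro g hg y ⟨q, hq, rfl⟩
    rw [hS] at hg; obtain ⟨i, rfl⟩ := hg
    exact ⟨gs₀ i q,
      smul_mem_orbSet (Subgroup.subset_closure (by rw [hS₀]; exact ⟨i, rfl⟩)) hq,
      hgood q hq i⟩
  · exact ⟨p, mem_orbSet_self _ _, rfl⟩

lemma good_orbit_iff (hS : S = Set.range gs) (hS₀ : S₀ = Set.range gs₀)
    (h2 : ∀ p, ¬ GoodPt gs gs₀ p → ∃ y ∈ e, y ∈ orbSet S (p : F))
    (p : {f : F // f ∉ e}) :
    (∀ q ∈ orbSet S₀ p, GoodPt gs gs₀ q) ↔ ∀ y ∈ orbSet S (p : F), y ∉ e := by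
  constructor
  · intro hgood y hy
    obtain ⟨q, _, rfl⟩ := orbit_sub_coe hS hS₀ hgood hy
    exact q.2
  · intro hmiss
    have hsub : orbSet S₀ p ⊆ {q | GoodPt gs gs₀ q ∧ (q : F) ∈ orbSet S (p : F)} := by
      apply orbSet_subset
      · rintro g hg q ⟨hq1, hq2⟩
        rw [hS₀] at hg; obtain ⟨i, rfl⟩ := hg
        have hcoe : ((gs₀ i q : F)) = gs i (q : F) := hq1 i
        have hmem : ((gs₀ i q : F)) ∈ orbSet S (p : F) := by
          rw [hcoe]
          exact smul_mem_orbSet (Subgroup.subset_closure (by rw [hS]; exact ⟨i, rfl⟩)) hq2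
        refine ⟨?_, hmem⟩
        by_contra hbad
        obtain ⟨y, hy, hyo⟩ := h2 _ hbad
        rw [orbSet_eq_of_mem hmem] at hyo
        exact hmiss y hyo hy
      · refine ⟨?_, mem_orbSet_self _ _⟩
        by_contra hbad
        obtain ⟨y, hy, hyo⟩ := h2 _ hbad
        exact hmiss y hyo hy
    exact fun q hq => (hsub hq).1

lemma master (hS : S = Set.range gs) (hS₀ : S₀ = Set.range gs₀)
    (h2 : ∀ p, ¬ GoodPt gs gs₀ p → ∃ y ∈ e, y ∈ orbSet S (p : F)) :
    (orbCount S : ℤ) - orbCount S₀ =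
      ({c : MulAction.orbitRel.Quotient (Subgroup.closure S) F |
          ∃ y ∈ MulAction.orbitRel.Quotient.orbit c, y ∈ e}.ncard : ℤ)
      - ({c : MulAction.orbitRel.Quotient (Subgroup.closure S₀) {f : F // f ∉ e} |
          ∃ q ∈ MulAction.orbitRel.Quotient.orbit c, ¬ GoodPt gs gs₀ q}.ncard : ℤ) := by
  classical
  set QG := MulAction.orbitRel.Quotient (Subgroup.closure S) F with hQG
  set QH := MulAction.orbitRel.Quotient (Subgroup.closure S₀) {f : F // f ∉ e} with hQH
  set Qe : Set QG := {c | ∃ y ∈ MulAction.orbitRel.Quotient.orbit c, y ∈ e} with hQe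
  set Qt : Set QH := {c | ∃ q ∈ MulAction.orbitRel.Quotient.orbit c, ¬ GoodPt gs gs₀ q} with hQt
  have hfinG : Finite QG := Quotient.finite _
  have hfinH : Finite QH := Quotient.finite _
  -- the "missed e" classes have representative outside e
  have hne : ∀ c : QG, c ∈ Qeᶜ → (Quotient.out c : F) ∉ e := by
    intro c hc hmem
    exact hc ⟨Quotient.out c, by rw [orbit_out]; exact mem_orbSet_self _ _, hmem⟩
  have hmissG : ∀ c : QG, c ∈ Qeᶜ → ∀ y ∈ orbSet S (Quotient.out c), y ∉ e := by
    intro c hc y hy hye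
    exact hc ⟨y, by rw [orbit_out]; exact hy, hye⟩
  have hmissH : ∀ d : QH, d ∈ Qtᶜ → ∀ q ∈ orbSet S₀ (Quotient.out d), GoodPt gs gs₀ q := by
    intro d hd q hq
    by_contra hbad
    exact hd ⟨q, by rw [orbit_out]; exact hq, hbad⟩
  -- injection Qeᶜ → Qtᶜ
  have hF1 : ∀ c : QG, c ∈ Qeᶜ →
      ∃ d : QH, d ∈ Qtᶜ ∧ ∃ p : {f : F // f ∉ e},
        (p : F) = Quotient.out c ∧ d = Quotient.mk'' p := by
    intro c hc
    refine ⟨Quotient.mk'' ⟨Quotient.out c, hne c hc⟩, ?_, ⟨Quotient.out c, hne c hc⟩, rfl, rfl⟩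
    intro hmem
    obtain ⟨q, hq, hbad⟩ := hmem
    rw [MulAction.orbitRel.Quotient.orbit_mk] at hq
    have hgood := (good_orbit_iff hS hS₀ h2 _).mpr (hmissG c hc) q hq
    exact hbad hgood
  choose F1 hF1mem F1p hF1p hF1eq using hF1
  have hinj1 : ∀ c₁ h₁ c₂ h₂, F1 c₁ h₁ = F1 c₂ h₂ → c₁ = c₂ := by
    intro c₁ h₁ c₂ h₂ heq
    rw [hF1eq c₁ h₁, hF1eq c₂ h₂] at heq
    have hrel : F1p c₁ h₁ ∈ orbSet S₀ (F1p c₂ h₂) := mem_of_mk_eq heq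
    have hcoe : ((F1p c₁ h₁ : F)) ∈ orbSet S ((F1p c₂ h₂ : F)) :=
      coe_orbit_subset hS hS₀
        ((good_orbit_iff hS hS₀ h2 _).mpr (by rw [hF1p c₂ h₂]; exact hmissG c₂ h₂)) _ hrel
    have : (Quotient.mk'' ((F1p c₁ h₁ : F)) : QG) = Quotient.mk'' ((F1p c₂ h₂ : F)) :=
      mk_eq_of_mem hcoe
    rw [hF1p c₁ h₁, hF1p c₂ h₂] at this
    rw [← Quotient.out_eq' c₁, ← Quotient.out_eq' c₂]
    exact this
  -- injection Qtᶜ → Qeᶜ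
  have hF2 : ∀ d : QH, d ∈ Qtᶜ →
      (Quotient.mk'' ((Quotient.out d : {f : F // f ∉ e}) : F) : QG) ∈ Qeᶜ := by
    intro d hd hmem
    obtain ⟨y, hy, hye⟩ := hmem
    rw [MulAction.orbitRel.Quotient.orbit_mk] at hy
    exact (good_orbit_iff hS hS₀ h2 _).mp (hmissH d hd) y hy hye
  have hinj2 : ∀ d₁ (h₁ : d₁ ∈ Qtᶜ) d₂ (h₂ : d₂ ∈ Qtᶜ),
      (Quotient.mk'' ((Quotient.out d₁ : {f : F // f ∉ e}) : F) : QG) =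
        Quotient.mk'' ((Quotient.out d₂ : {f : F // f ∉ e}) : F) → d₁ = d₂ := by
    intro d₁ h₁ d₂ h₂ heq
    have hrel : ((Quotient.out d₁ : {f : F // f ∉ e}) : F) ∈
        orbSet S ((Quotient.out d₂ : {f : F // f ∉ e}) : F) := mem_of_mk_eq heq
    have himg := orbit_sub_coe hS hS₀ (hmissH d₂ h₂) hrel
    obtain ⟨q, hq, hqc⟩ := himg
    have : q = Quotient.out d₁ := Subtype.ext hqc
    rw [this] at hq
    have : (Quotient.mk'' (Quotient.out d₁) : QH) = Quotient.mk'' (Quotient.out d₂) :=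
      mk_eq_of_mem hq
    rw [← Quotient.out_eq' d₁, ← Quotient.out_eq' d₂]
    exact this
  -- cards
  have hcard1 : Nat.card ↥(Qeᶜ) ≤ Nat.card ↥(Qtᶜ) := by
    refine Nat.card_le_card_of_injective (fun c => ⟨F1 c.1 c.2, hF1mem c.1 c.2⟩) ?_
    intro c₁ c₂ hc
    exact Subtype.ext (hinj1 c₁.1 c₁.2 c₂.1 c₂.2 (Subtype.ext_iff.mp hc))
  have hcard2 : Nat.card ↥(Qtᶜ) ≤ Nat.card ↥(Qeᶜ) := by
    refine Nat.card_le_card_of_injective (fun d => ⟨Quotient.mk''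
      ((Quotient.out d.1 : {f : F // f ∉ e}) : F), hF2 d.1 d.2⟩) ?_
    intro d₁ d₂ hd
    exact Subtype.ext (hinj2 d₁.1 d₁.2 d₂.1 d₂.2 (Subtype.ext_iff.mp hd))
  have hcc : (Qeᶜ).ncard = (Qtᶜ).ncard := by
    rw [← Nat.card_coe_set_eq, ← Nat.card_coe_set_eq]
    exact le_antisymm hcard1 hcard2
  have hcountG : Qe.ncard + (Qeᶜ).ncard = Nat.card QG :=
    Set.ncard_add_ncard_compl Qe (Set.toFinite _) (Set.toFinite _)
  have hcountH : Qt.ncard + (Qtᶜ).ncard = Nat.card QH :=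
    Set.ncard_add_ncard_compl Qt (Set.toFinite _) (Set.toFinite _)
  have horbG : orbCount S = Nat.card QG := rfl
  have horbH : orbCount S₀ = Nat.card QH := rfl
  rw [horbG, horbH]
  omega

end master
section structure_lemmas
set_option linter.unusedSectionVars false

lemma fpf_apply {X : Type*} {g : Equiv.Perm X} (h : g * g = 1) (z : X) : g (g z) = z := by
  rw [← Equiv.Perm.mul_apply, h, Equiv.Perm.one_apply]

lemma orb4 {F : Type*} [Fintype F] {θ σ' : Equiv.Perm F} (hθ : FPF θ) (hσ : FPF σ') (x : F)
    (hcard : Nat.card (orbSet {θ, σ'} x) = 4) :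
    orbSet {θ, σ'} x = {x, θ x, σ' x, σ' (θ x)} ∧ θ (σ' x) = σ' (θ x) := by
  have hθa := fpf_apply hθ.1
  have hσa := fpf_apply hσ.1
  have hθm : θ ∈ Subgroup.closure ({θ, σ'} : Set (Equiv.Perm F)) :=
    Subgroup.subset_closure (by simp)
  have hσm : σ' ∈ Subgroup.closure ({θ, σ'} : Set (Equiv.Perm F)) :=
    Subgroup.subset_closure (by simp)
  have hxO : x ∈ orbSet {θ, σ'} x := mem_orbSet_self _ _
  have hsub : ({x, θ x, σ' x, σ' (θ x)} : Set F) ⊆ orbSet {θ, σ'} x := by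
    intro y hy
    rcases hy with rfl | rfl | rfl | rfl
    · exact hxO
    · exact smul_mem_orbSet hθm hxO
    · exact smul_mem_orbSet hσm hxO
    · exact smul_mem_orbSet hσm (smul_mem_orbSet hθm hxO)
  have hOn : (orbSet {θ, σ'} x).ncard = 4 := by
    rw [← Nat.card_coe_set_eq]; exact hcard
  have hne1 : θ x ≠ σ' x := by
    intro hh
    have hsub2 : orbSet {θ, σ'} x ⊆ {x, θ x} := by
      apply orbSet_subset
      · rintro g hg y hy
        have hg' : g = θ ∨ g = σ' := hg
        rcases hy with rfl | rfl <;> rcases hg' with rfl | rfl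
        · right; rfl
        · rw [← hh]; right; rfl
        · left; exact hθa x
        · rw [hh]; left; exact hσa x
      · left; rfl
    have h2 : (orbSet {θ, σ'} x).ncard ≤ 2 := by
      refine le_trans (Set.ncard_le_ncard hsub2 (Set.toFinite _)) ?_
      refine le_trans (Set.ncard_insert_le _ _) ?_
      simp
    omega
  have hxθ : x ≠ θ x := fun h => hθ.2 x h.symm
  have hxσ : x ≠ σ' x := fun h => hσ.2 x h.symm
  have hxt : x ≠ σ' (θ x) := by
    intro h
    have h2 := congrArg σ' h
    rw [hσa] at h2
    exact hne1 h2.symm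
  have hθt : θ x ≠ σ' (θ x) := fun h => hσ.2 (θ x) h.symm
  have hσt : σ' x ≠ σ' (θ x) := fun h => hxθ (σ'.injective h)
  have hT4 : ({x, θ x, σ' x, σ' (θ x)} : Set F).ncard = 4 := by
    rw [Set.ncard_insert_of_notMem (by simp [hxθ, hxσ, hxt]) (Set.toFinite _),
      Set.ncard_insert_of_notMem (by simp [hne1, hθt]) (Set.toFinite _),
      Set.ncard_insert_of_notMem (by simp [hσt]) (Set.toFinite _),
      Set.ncard_singleton]
  have hEq : ({x, θ x, σ' x, σ' (θ x)} : Set F) = orbSet {θ, σ'} x :=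
    Set.eq_of_subset_of_ncard_le hsub (by rw [hOn, hT4]) (Set.toFinite _)
  refine ⟨hEq.symm, ?_⟩
  have hmem : θ (σ' x) ∈ orbSet {θ, σ'} x := smul_mem_orbSet hθm (smul_mem_orbSet hσm hxO)
  rw [← hEq] at hmem
  rcases hmem with h | h | h | h
  · exfalso
    have := congrArg θ h
    rw [hθa] at this
    exact hne1.symm (by rw [this])
  · exfalso
    exact hxσ.symm (θ.injective h)
  · exact absurd h (fun hh => hθ.2 (σ' x) hh)
  · exact h

lemma ncard_le_one_of_sub {α : Type*} (s : Set α) (h : ∀ a ∈ s, ∀ b ∈ s, a = b) :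
    s.ncard ≤ 1 := by
  rcases s.eq_empty_or_nonempty with rfl | ⟨a, ha⟩
  · simp
  · have : s ⊆ {a} := fun b hb => h b hb a ha
    exact le_trans (Set.ncard_le_ncard this (Set.toFinite _)) (by simp)

lemma touched_bound {F : Type*} [Fintype F] {θ σ' φ' : Equiv.Perm F} {e : Set F}
    {θ₀ σ₀ φ₀ : Equiv.Perm {f : F // f ∉ e}}
    (hdel : IsEdgeDeletion σ' φ' e θ₀ σ₀ φ₀ θ)
    (hσ : σ' * σ' = 1) (hφ : φ' * φ' = 1)
    {S₀ : Set (Equiv.Perm {f : F // f ∉ e})} (hφ₀ : φ₀ ∈ S₀) {x : F}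
    (hxe : x ∈ e) (hθxe : θ x ∈ e) (hσxe : σ' x ∈ e) (hσθxe : σ' (θ x) ∈ e)
    (hecase : ∀ y ∈ e, y = x ∨ y = θ x ∨ y = σ' x ∨ y = σ' (θ x))
    (Bd : {f : F // f ∉ e} → Prop)
    (hBd : ∀ p, Bd p → φ' (p : F) ∈ e) :
    {c : MulAction.orbitRel.Quotient (Subgroup.closure S₀) {f : F // f ∉ e} |
      ∃ q ∈ MulAction.orbitRel.Quotient.orbit c, Bd q}.ncard ≤ 2 := by
  classical
  have hφa := fpf_apply hφ
  have hσa := fpf_apply hσ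
  set QH := MulAction.orbitRel.Quotient (Subgroup.closure S₀) {f : F // f ∉ e} with hQH
  set A1 : Set QH := {c | ∃ q ∈ MulAction.orbitRel.Quotient.orbit c,
    (q : F) = φ' x ∨ (q : F) = φ' (σ' x)} with hA1
  set A2 : Set QH := {c | ∃ q ∈ MulAction.orbitRel.Quotient.orbit c,
    (q : F) = φ' (θ x) ∨ (q : F) = φ' (σ' (θ x))} with hA2
  have hsub : {c : QH | ∃ q ∈ MulAction.orbitRel.Quotient.orbit c, Bd q} ⊆ A1 ∪ A2 := by
    rintro c ⟨q, hq, hb⟩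
    have hqe := hBd q hb
    have hcoe : (q : F) = φ' (φ' (q : F)) := (hφa _).symm
    rcases hecase _ hqe with h | h | h | h
    · exact Or.inl ⟨q, hq, Or.inl (by rw [hcoe, h])⟩
    · exact Or.inr ⟨q, hq, Or.inl (by rw [hcoe, h])⟩
    · exact Or.inl ⟨q, hq, Or.inr (by rw [hcoe, h])⟩
    · exact Or.inr ⟨q, hq, Or.inr (by rw [hcoe, h])⟩
  -- pair connection
  have hpair : ∀ (y : F), y ∈ e → σ' y ∈ e → ∀ (q₁ q₂ : {f : F // f ∉ e}) (c₁ c₂ : QH),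
      q₁ ∈ MulAction.orbitRel.Quotient.orbit c₁ →
      q₂ ∈ MulAction.orbitRel.Quotient.orbit c₂ →
      (q₁ : F) = φ' y → (q₂ : F) = φ' (σ' y) → c₁ = c₂ := by
    intro y hy hσy q₁ q₂ c₁ c₂ hq₁ hq₂ hv₁ hv₂
    have hstep : φ₀ q₁ = q₂ := pair_step (θ := θ) hdel hφ hy hv₁ hv₂
    have hmem : q₂ ∈ orbSet S₀ q₁ := by
      rw [← hstep]
      exact smul_mem_orbSet (Subgroup.subset_closure hφ₀) (mem_orbSet_self _ _)
    have h1 : Quotient.mk'' q₁ = c₁ := MulAction.orbitRel.Quotient.mem_orbit.mp hq₁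
    have h2 : Quotient.mk'' q₂ = c₂ := MulAction.orbitRel.Quotient.mem_orbit.mp hq₂
    rw [← h1, ← h2]
    exact (mk_eq_of_mem hmem).symm
  have hsing : ∀ (y : F), y ∈ e → σ' y ∈ e →
      ∀ c₁ ∈ {c : QH | ∃ q ∈ MulAction.orbitRel.Quotient.orbit c,
          (q : F) = φ' y ∨ (q : F) = φ' (σ' y)},
      ∀ c₂ ∈ {c : QH | ∃ q ∈ MulAction.orbitRel.Quotient.orbit c,
          (q : F) = φ' y ∨ (q : F) = φ' (σ' y)}, c₁ = c₂ := by
    rintro y hy hσy c₁ ⟨q₁, hq₁, hv₁⟩ c₂ ⟨q₂, hq₂, hv₂⟩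
    rcases hv₁ with h1 | h1 <;> rcases hv₂ with h2 | h2
    · have : q₁ = q₂ := Subtype.ext (h1.trans h2.symm)
      rw [← MulAction.orbitRel.Quotient.mem_orbit.mp hq₁,
        ← MulAction.orbitRel.Quotient.mem_orbit.mp hq₂, this]
    · exact hpair y hy hσy q₁ q₂ c₁ c₂ hq₁ hq₂ h1 h2
    · exact (hpair y hy hσy q₂ q₁ c₂ c₁ hq₂ hq₁ h2 h1).symm
    · have : q₁ = q₂ := Subtype.ext (h1.trans h2.symm)
      rw [← MulAction.orbitRel.Quotient.mem_orbit.mp hq₁,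
        ← MulAction.orbitRel.Quotient.mem_orbit.mp hq₂, this]
  have hb1 : A1.ncard ≤ 1 := ncard_le_one_of_sub _ (hsing x hxe hσxe)
  have hb2 : A2.ncard ≤ 1 := ncard_le_one_of_sub _ (hsing (θ x) hθxe hσθxe)
  refine le_trans (Set.ncard_le_ncard hsub (Set.toFinite _)) ?_
  refine le_trans (Set.ncard_union_le _ _) ?_
  omega

end structure_lemmas
set_option maxHeartbeats 1000000 in
theorem stmt9 {F : Type*} [Fintype F]
    (θ σ' φ' : Equiv.Perm F) (h : IsGraphEmb θ σ' φ') (x : F)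
    (e : Set F) (he : e = orbSet {θ, σ'} x)
    (θ₀ σ₀ φ₀ : Equiv.Perm {f : F // f ∉ e})
    (hdel : IsEdgeDeletion σ' φ' e θ₀ σ₀ φ₀ θ) :
    (orbCount {θ, σ'} : ℤ) - orbCount {θ₀, σ₀} = 1 ∧
    (orbCount {σ', φ'} : ℤ) - orbCount {σ₀, φ₀} ∈ ({0, 1, 2} : Set ℤ) ∧
    (orbCount {θ, φ'} : ℤ) - orbCount {θ₀, φ₀} ∈ ({-1, 0, 1, 2} : Set ℤ) ∧
    (orbCount {θ, σ', φ'} : ℤ) - orbCount {θ₀, σ₀, φ₀} ∈ ({-1, 0, 1} : Set ℤ) := by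
  classical
  obtain ⟨hθ, hσ, hφ, hall⟩ := h
  obtain ⟨ho4, hcomm⟩ := orb4 hθ hσ x (hall x)
  have hE : e = {x, θ x, σ' x, σ' (θ x)} := he.trans ho4
  have hxe : x ∈ e := by rw [hE]; left; rfl
  have hθxe : θ x ∈ e := by rw [hE]; right; left; rfl
  have hσxe : σ' x ∈ e := by rw [hE]; right; right; left; rfl
  have hσθxe : σ' (θ x) ∈ e := by rw [hE]; right; right; right; rfl
  have hecase : ∀ y ∈ e, y = x ∨ y = θ x ∨ y = σ' x ∨ y = σ' (θ x) := by
    intro y hy; rw [hE] at hy; exact hy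
  have hσe : ∀ y ∈ e, σ' y ∈ e := by
    intro y hy; rw [he] at hy ⊢
    exact smul_mem_orbSet (Subgroup.subset_closure (by simp)) hy
  have hθe : ∀ y ∈ e, θ y ∈ e := by
    intro y hy; rw [he] at hy ⊢
    exact smul_mem_orbSet (Subgroup.subset_closure (by simp)) hy
  refine ⟨?_, ?_, ?_, ?_⟩
  -- Part 1 : edges
  · have hS : ({θ, σ'} : Set (Equiv.Perm F)) = Set.range ![θ, σ'] := by
      ext g
      constructor
      · rintro (rfl | rfl)
        exacts [⟨0, rfl⟩, ⟨1, rfl⟩]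
      · rintro ⟨i, rfl⟩
        fin_cases i <;> simp
    have hS₀ : ({θ₀, σ₀} : Set (Equiv.Perm {f : F // f ∉ e})) = Set.range ![θ₀, σ₀] := by
      ext g
      constructor
      · rintro (rfl | rfl)
        exacts [⟨0, rfl⟩, ⟨1, rfl⟩]
      · rintro ⟨i, rfl⟩
        fin_cases i <;> simp
    have hgood : ∀ p, GoodPt ![θ, σ'] ![θ₀, σ₀] p := by
      intro p i
      fin_cases i
      · simpa using (hdel.1 p).1
      · simpa using (hdel.1 p).2
    have hm := master (e := e) hS hS₀ (fun p hb => absurd (hgood p) hb)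
    rw [hm]
    have hQt : {c : MulAction.orbitRel.Quotient
          (Subgroup.closure ({θ₀, σ₀} : Set (Equiv.Perm {f : F // f ∉ e}))) {f : F // f ∉ e} |
        ∃ q ∈ MulAction.orbitRel.Quotient.orbit c, ¬ GoodPt ![θ, σ'] ![θ₀, σ₀] q} = ∅ := by
      refine Set.eq_empty_iff_forall_notMem.mpr ?_
      rintro c ⟨q, _, hb⟩
      exact hb (hgood q)
    have hQe : {c : MulAction.orbitRel.Quotient
          (Subgroup.closure ({θ, σ'} : Set (Equiv.Perm F))) F |
        ∃ y ∈ MulAction.orbitRel.Quotient.orbit c, y ∈ e} = {Quotient.mk'' x} := by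
      ext c
      constructor
      · rintro ⟨y, hy, hye⟩
        have h1 : Quotient.mk'' y = c := MulAction.orbitRel.Quotient.mem_orbit.mp hy
        rw [he] at hye
        rw [Set.mem_singleton_iff]
        exact h1.symm.trans (mk_eq_of_mem hye)
      · intro hc
        rw [Set.mem_singleton_iff] at hc
        subst hc
        exact ⟨x, MulAction.orbitRel.Quotient.mem_orbit.mpr rfl, hxe⟩
    rw [hQt, hQe]
    simp
  -- Part 2 : vertices
  · have hS : ({σ', φ'} : Set (Equiv.Perm F)) = Set.range ![σ', φ'] := by
      ext g
      constructor
      · rintro (rfl | rfl)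
        exacts [⟨0, rfl⟩, ⟨1, rfl⟩]
      · rintro ⟨i, rfl⟩
        fin_cases i <;> simp
    have hS₀ : ({σ₀, φ₀} : Set (Equiv.Perm {f : F // f ∉ e})) = Set.range ![σ₀, φ₀] := by
      ext g
      constructor
      · rintro (rfl | rfl)
        exacts [⟨0, rfl⟩, ⟨1, rfl⟩]
      · rintro ⟨i, rfl⟩
        fin_cases i <;> simp
    have hbadmem : ∀ p : {f : F // f ∉ e}, ¬ GoodPt ![σ', φ'] ![σ₀, φ₀] p →
        φ' (p : F) ∈ e := by
      intro p hb
      by_contra hne'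
      apply hb
      intro i
      fin_cases i
      · simpa using (hdel.1 p).2
      · simpa using phi0_of_not_mem (θ := θ) hdel p hne'
    have hφm : φ' ∈ Subgroup.closure ({σ', φ'} : Set (Equiv.Perm F)) :=
      Subgroup.subset_closure (by simp)
    have hσm : σ' ∈ Subgroup.closure ({σ', φ'} : Set (Equiv.Perm F)) :=
      Subgroup.subset_closure (by simp)
    have h2 : ∀ p, ¬ GoodPt ![σ', φ'] ![σ₀, φ₀] p →
        ∃ y ∈ e, y ∈ orbSet {σ', φ'} (p : F) :=
      fun p hb => ⟨φ' (p : F), hbadmem p hb, smul_mem_orbSet hφm (mem_orbSet_self _ _)⟩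
    have hm := master (e := e) hS hS₀ h2
    rw [hm]
    have hQe2 : {c : MulAction.orbitRel.Quotient
          (Subgroup.closure ({σ', φ'} : Set (Equiv.Perm F))) F |
        ∃ y ∈ MulAction.orbitRel.Quotient.orbit c, y ∈ e}.ncard ≤ 2 := by
      have hsubQ : {c : MulAction.orbitRel.Quotient
          (Subgroup.closure ({σ', φ'} : Set (Equiv.Perm F))) F |
          ∃ y ∈ MulAction.orbitRel.Quotient.orbit c, y ∈ e} ⊆
          {Quotient.mk'' x, Quotient.mk'' (θ x)} := by
        rintro c ⟨y, hy, hye⟩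
        have h1 : Quotient.mk'' y = c := MulAction.orbitRel.Quotient.mem_orbit.mp hy
        rcases hecase y hye with rfl | rfl | rfl | rfl
        · exact Or.inl h1.symm
        · exact Or.inr h1.symm
        · exact Or.inl (h1.symm.trans
            (mk_eq_of_mem (smul_mem_orbSet hσm (mem_orbSet_self _ _))))
        · exact Or.inr (h1.symm.trans
            (mk_eq_of_mem (smul_mem_orbSet hσm (mem_orbSet_self _ _))))
      refine le_trans (Set.ncard_le_ncard hsubQ (Set.toFinite _)) ?_
      refine le_trans (Set.ncard_insert_le _ _) ?_
      simp
    have hQe1 : 1 ≤ {c : MulAction.orbitRel.Quotient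
          (Subgroup.closure ({σ', φ'} : Set (Equiv.Perm F))) F |
        ∃ y ∈ MulAction.orbitRel.Quotient.orbit c, y ∈ e}.ncard := by
      have hmemx : (Quotient.mk'' x : MulAction.orbitRel.Quotient
          (Subgroup.closure ({σ', φ'} : Set (Equiv.Perm F))) F) ∈
          {c : MulAction.orbitRel.Quotient
            (Subgroup.closure ({σ', φ'} : Set (Equiv.Perm F))) F |
          ∃ y ∈ MulAction.orbitRel.Quotient.orbit c, y ∈ e} :=
        ⟨x, MulAction.orbitRel.Quotient.mem_orbit.mpr rfl, hxe⟩
      have hpos := (Set.ncard_pos (Set.toFinite _)).mpr ⟨_, hmemx⟩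
      omega
    have hQtle : {c : MulAction.orbitRel.Quotient
          (Subgroup.closure ({σ₀, φ₀} : Set (Equiv.Perm {f : F // f ∉ e}))) {f : F // f ∉ e} |
        ∃ q ∈ MulAction.orbitRel.Quotient.orbit c, ¬ GoodPt ![σ', φ'] ![σ₀, φ₀] q}.ncard ≤
        {c : MulAction.orbitRel.Quotient
          (Subgroup.closure ({σ', φ'} : Set (Equiv.Perm F))) F |
        ∃ y ∈ MulAction.orbitRel.Quotient.orbit c, y ∈ e}.ncard := by
      rw [← Nat.card_coe_set_eq, ← Nat.card_coe_set_eq]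
      have hmap : ∀ c : MulAction.orbitRel.Quotient
          (Subgroup.closure ({σ₀, φ₀} : Set (Equiv.Perm {f : F // f ∉ e}))) {f : F // f ∉ e},
          (∃ q ∈ MulAction.orbitRel.Quotient.orbit c, ¬ GoodPt ![σ', φ'] ![σ₀, φ₀] q) →
          (Quotient.mk'' ((Quotient.out c : {f : F // f ∉ e}) : F) :
            MulAction.orbitRel.Quotient
              (Subgroup.closure ({σ', φ'} : Set (Equiv.Perm F))) F) ∈
          {c : MulAction.orbitRel.Quotient
            (Subgroup.closure ({σ', φ'} : Set (Equiv.Perm F))) F |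
          ∃ y ∈ MulAction.orbitRel.Quotient.orbit c, y ∈ e} := by
        rintro c ⟨q, hq, hb⟩
        rw [orbit_out] at hq
        have h1 : (q : F) ∈ orbSet {σ', φ'} ((Quotient.out c : {f : F // f ∉ e}) : F) :=
          compatV (θ := θ) hdel hq
        refine ⟨φ' (q : F), ?_, hbadmem q hb⟩
        rw [MulAction.orbitRel.Quotient.orbit_mk]
        exact smul_mem_orbSet hφm h1
      refine Nat.card_le_card_of_injective (fun c => ⟨_, hmap c.1 c.2⟩) ?_
      intro c₁ c₂ hc
      have heq := Subtype.ext_iff.mp hc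
      simp only at heq
      have hrel := mem_of_mk_eq heq
      have hlift := vertex_lift (θ := θ) hdel hσ.1 hφ.1 hσe hrel
      have hfin : (Quotient.mk'' (Quotient.out c₁.1) :
          MulAction.orbitRel.Quotient
            (Subgroup.closure ({σ₀, φ₀} : Set (Equiv.Perm {f : F // f ∉ e})))
            {f : F // f ∉ e}) = Quotient.mk'' (Quotient.out c₂.1) := mk_eq_of_mem hlift
      apply Subtype.ext
      rw [← Quotient.out_eq' c₁.1, ← Quotient.out_eq' c₂.1]
      exact hfin
    simp only [Set.mem_insert_iff, Set.mem_singleton_iff]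
    omega
  -- Part 3 : faces
  · have hS : ({θ, φ'} : Set (Equiv.Perm F)) = Set.range ![θ, φ'] := by
      ext g
      constructor
      · rintro (rfl | rfl)
        exacts [⟨0, rfl⟩, ⟨1, rfl⟩]
      · rintro ⟨i, rfl⟩
        fin_cases i <;> simp
    have hS₀ : ({θ₀, φ₀} : Set (Equiv.Perm {f : F // f ∉ e})) = Set.range ![θ₀, φ₀] := by
      ext g
      constructor
      · rintro (rfl | rfl)
        exacts [⟨0, rfl⟩, ⟨1, rfl⟩]
      · rintro ⟨i, rfl⟩
        fin_cases i <;> simp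
    have hbadmem : ∀ p : {f : F // f ∉ e}, ¬ GoodPt ![θ, φ'] ![θ₀, φ₀] p →
        φ' (p : F) ∈ e := by
      intro p hb
      by_contra hne'
      apply hb
      intro i
      fin_cases i
      · simpa using (hdel.1 p).1
      · simpa using phi0_of_not_mem (θ := θ) hdel p hne'
    have hφm : φ' ∈ Subgroup.closure ({θ, φ'} : Set (Equiv.Perm F)) :=
      Subgroup.subset_closure (by simp)
    have hθm : θ ∈ Subgroup.closure ({θ, φ'} : Set (Equiv.Perm F)) :=
      Subgroup.subset_closure (by simp)
    have h2 : ∀ p, ¬ GoodPt ![θ, φ'] ![θ₀, φ₀] p →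
        ∃ y ∈ e, y ∈ orbSet {θ, φ'} (p : F) :=
      fun p hb => ⟨φ' (p : F), hbadmem p hb, smul_mem_orbSet hφm (mem_orbSet_self _ _)⟩
    have hm := master (e := e) hS hS₀ h2
    rw [hm]
    have hQe2 : {c : MulAction.orbitRel.Quotient
          (Subgroup.closure ({θ, φ'} : Set (Equiv.Perm F))) F |
        ∃ y ∈ MulAction.orbitRel.Quotient.orbit c, y ∈ e}.ncard ≤ 2 := by
      have hsubQ : {c : MulAction.orbitRel.Quotient
          (Subgroup.closure ({θ, φ'} : Set (Equiv.Perm F))) F |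
          ∃ y ∈ MulAction.orbitRel.Quotient.orbit c, y ∈ e} ⊆
          {Quotient.mk'' x, Quotient.mk'' (σ' x)} := by
        rintro c ⟨y, hy, hye⟩
        have h1 : Quotient.mk'' y = c := MulAction.orbitRel.Quotient.mem_orbit.mp hy
        rcases hecase y hye with rfl | rfl | rfl | rfl
        · exact Or.inl h1.symm
        · exact Or.inl (h1.symm.trans
            (mk_eq_of_mem (smul_mem_orbSet hθm (mem_orbSet_self _ _))))
        · exact Or.inr h1.symm
        · refine Or.inr ?_
          rw [← hcomm] at h1
          exact h1.symm.trans (mk_eq_of_mem (smul_mem_orbSet hθm (mem_orbSet_self _ _)))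
      refine le_trans (Set.ncard_le_ncard hsubQ (Set.toFinite _)) ?_
      refine le_trans (Set.ncard_insert_le _ _) ?_
      simp
    have hQe1 : 1 ≤ {c : MulAction.orbitRel.Quotient
          (Subgroup.closure ({θ, φ'} : Set (Equiv.Perm F))) F |
        ∃ y ∈ MulAction.orbitRel.Quotient.orbit c, y ∈ e}.ncard := by
      have hmemx : (Quotient.mk'' x : MulAction.orbitRel.Quotient
          (Subgroup.closure ({θ, φ'} : Set (Equiv.Perm F))) F) ∈
          {c : MulAction.orbitRel.Quotient
            (Subgroup.closure ({θ, φ'} : Set (Equiv.Perm F))) F |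
          ∃ y ∈ MulAction.orbitRel.Quotient.orbit c, y ∈ e} :=
        ⟨x, MulAction.orbitRel.Quotient.mem_orbit.mpr rfl, hxe⟩
      have hpos := (Set.ncard_pos (Set.toFinite _)).mpr ⟨_, hmemx⟩
      omega
    have hQt2 : {c : MulAction.orbitRel.Quotient
          (Subgroup.closure ({θ₀, φ₀} : Set (Equiv.Perm {f : F // f ∉ e}))) {f : F // f ∉ e} |
        ∃ q ∈ MulAction.orbitRel.Quotient.orbit c,
          ¬ GoodPt ![θ, φ'] ![θ₀, φ₀] q}.ncard ≤ 2 :=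
      touched_bound hdel hσ.1 hφ.1 (by simp) hxe hθxe hσxe hσθxe hecase _ hbadmem
    simp only [Set.mem_insert_iff, Set.mem_singleton_iff]
    omega
  -- Part 4 : components
  · have hS : ({θ, σ', φ'} : Set (Equiv.Perm F)) = Set.range ![θ, σ', φ'] := by
      ext g
      constructor
      · rintro (rfl | rfl | rfl)
        exacts [⟨0, rfl⟩, ⟨1, rfl⟩, ⟨2, rfl⟩]
      · rintro ⟨i, rfl⟩
        fin_cases i <;> simp
    have hS₀ : ({θ₀, σ₀, φ₀} : Set (Equiv.Perm {f : F // f ∉ e})) =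
        Set.range ![θ₀, σ₀, φ₀] := by
      ext g
      constructor
      · rintro (rfl | rfl | rfl)
        exacts [⟨0, rfl⟩, ⟨1, rfl⟩, ⟨2, rfl⟩]
      · rintro ⟨i, rfl⟩
        fin_cases i <;> simp
    have hbadmem : ∀ p : {f : F // f ∉ e}, ¬ GoodPt ![θ, σ', φ'] ![θ₀, σ₀, φ₀] p →
        φ' (p : F) ∈ e := by
      intro p hb
      by_contra hne'
      apply hb
      intro i
      fin_cases i
      · simpa using (hdel.1 p).1
      · simpa using (hdel.1 p).2
      · simpa using phi0_of_not_mem (θ := θ) hdel p hne'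
    have hφm : φ' ∈ Subgroup.closure ({θ, σ', φ'} : Set (Equiv.Perm F)) :=
      Subgroup.subset_closure (by simp)
    have hθm : θ ∈ Subgroup.closure ({θ, σ', φ'} : Set (Equiv.Perm F)) :=
      Subgroup.subset_closure (by simp)
    have hσm : σ' ∈ Subgroup.closure ({θ, σ', φ'} : Set (Equiv.Perm F)) :=
      Subgroup.subset_closure (by simp)
    have h2 : ∀ p, ¬ GoodPt ![θ, σ', φ'] ![θ₀, σ₀, φ₀] p →
        ∃ y ∈ e, y ∈ orbSet {θ, σ', φ'} (p : F) :=
      fun p hb => ⟨φ' (p : F), hbadmem p hb, smul_mem_orbSet hφm (mem_orbSet_self _ _)⟩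
    have hm := master (e := e) hS hS₀ h2
    rw [hm]
    have hQeEq : {c : MulAction.orbitRel.Quotient
          (Subgroup.closure ({θ, σ', φ'} : Set (Equiv.Perm F))) F |
        ∃ y ∈ MulAction.orbitRel.Quotient.orbit c, y ∈ e} = {Quotient.mk'' x} := by
      ext c
      constructor
      · rintro ⟨y, hy, hye⟩
        have h1 : Quotient.mk'' y = c := MulAction.orbitRel.Quotient.mem_orbit.mp hy
        rw [Set.mem_singleton_iff]
        rcases hecase y hye with rfl | rfl | rfl | rfl
        · exact h1.symm
        · exact h1.symm.trans (mk_eq_of_mem (smul_mem_orbSet hθm (mem_orbSet_self _ _)))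
        · exact h1.symm.trans (mk_eq_of_mem (smul_mem_orbSet hσm (mem_orbSet_self _ _)))
        · exact h1.symm.trans (mk_eq_of_mem (smul_mem_orbSet hσm
            (smul_mem_orbSet hθm (mem_orbSet_self _ _))))
      · intro hc
        rw [Set.mem_singleton_iff] at hc
        subst hc
        exact ⟨x, MulAction.orbitRel.Quotient.mem_orbit.mpr rfl, hxe⟩
    have hQt2 : {c : MulAction.orbitRel.Quotient
          (Subgroup.closure ({θ₀, σ₀, φ₀} : Set (Equiv.Perm {f : F // f ∉ e})))
            {f : F // f ∉ e} |
        ∃ q ∈ MulAction.orbitRel.Quotient.orbit c,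
          ¬ GoodPt ![θ, σ', φ'] ![θ₀, σ₀, φ₀] q}.ncard ≤ 2 :=
      touched_bound hdel hσ.1 hφ.1 (by simp) hxe hθxe hσxe hσθxe hecase _ hbadmem
    rw [hQeEq]
    simp only [Set.mem_insert_iff, Set.mem_singleton_iff, Set.ncard_singleton]
    omega
end
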